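/- arXiv:2401.11593 — 5 statements merged into one kernel-verified Lean document; each statement's English description precedes it below -/
import Mathlib

section
/- (Perov inequality, case α = 1/2.) Let u : [t₀, ∞) → ℝ be continuous and nonnegative, let a, b : [t₀, ∞) → ℝ be continuous nonnegative functions, and let c ≥ 0. If u(t) ≤ c + ∫_{t₀}^t (a(s)·u(s) + b(s)·√(u(s))) ds for all t ≥ t₀, then u(t) ≤ ( √c · exp((1/2)∫_{t₀}^t a(s) ds) + (1/2)∫_{t₀}^t b(s)·exp((1/2)∫_s^t a(r) dr) ds )². -/
open Set Filter MeasureTheory intervalIntegral Topology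

theorem perov_inequality_half {t₀ : ℝ} {c : ℝ} (hc : 0 ≤ c)
    (u a b : ℝ → ℝ)
    (hu_cont : ContinuousOn u (Set.Ici t₀))
    (ha_cont : ContinuousOn a (Set.Ici t₀))
    (hb_cont : ContinuousOn b (Set.Ici t₀))
    (hu_nonneg : ∀ t ∈ Set.Ici t₀, 0 ≤ u t)
    (ha_nonneg : ∀ t ∈ Set.Ici t₀, 0 ≤ a t)
    (hb_nonneg : ∀ t ∈ Set.Ici t₀, 0 ≤ b t)
    (hineq : ∀ t ∈ Set.Ici t₀,
      u t ≤ c + ∫ s in t₀..t, (a s * u s + b s * Real.sqrt (u s))) :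
    ∀ t ∈ Set.Ici t₀,
      u t ≤ (Real.sqrt c * Real.exp ((1 / 2) * ∫ s in t₀..t, a s)
        + (1 / 2) * ∫ s in t₀..t, b s * Real.exp ((1 / 2) * ∫ r in s..t, a r)) ^ 2 := by
  intro t ht
  rw [Set.mem_Ici] at ht
  set f : ℝ → ℝ := fun s => a s * u s + b s * Real.sqrt (u s) with hf_def
  have hf_cont : ContinuousOn f (Set.Ici t₀) :=
    (ha_cont.mul hu_cont).add (hb_cont.mul (Real.continuous_sqrt.comp_continuousOn hu_cont))
  have hsub : ∀ x ∈ Set.Icc t₀ t, Set.uIcc t₀ x ⊆ Set.Ici t₀ := by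
    intro x hx
    rw [Set.uIcc_of_le hx.1]
    exact fun y hy => hy.1
  have hf_int : ∀ x ∈ Set.Icc t₀ t, IntervalIntegrable f volume t₀ x := fun x hx =>
    (hf_cont.mono (hsub x hx)).intervalIntegrable
  have ha_int : ∀ x ∈ Set.Icc t₀ t, IntervalIntegrable a volume t₀ x := fun x hx =>
    (ha_cont.mono (hsub x hx)).intervalIntegrable
  have hf_nonneg : ∀ s ∈ Set.Ici t₀, 0 ≤ f s := fun s hs =>
    add_nonneg (mul_nonneg (ha_nonneg s hs) (hu_nonneg s hs))
      (mul_nonneg (hb_nonneg s hs) (Real.sqrt_nonneg _))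
  set A : ℝ → ℝ := fun x => ∫ s in t₀..x, a s with hA_def
  have hIccSub : Set.Icc t₀ t ⊆ Set.Ici t₀ := fun y hy => hy.1
  have hA_cont : ContinuousOn A (Set.Icc t₀ t) := by
    have hint : MeasureTheory.IntegrableOn a (Set.uIcc t₀ t) volume := by
      rw [Set.uIcc_of_le ht]; exact (ha_cont.mono hIccSub).integrableOn_Icc
    have := intervalIntegral.continuousOn_primitive_interval hint
    rwa [Set.uIcc_of_le ht] at this
  have hA_deriv : ∀ x ∈ Set.Ioo t₀ t, HasDerivAt A (a x) x := by
    intro x hx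
    apply intervalIntegral.integral_hasDerivAt_right (ha_int x (Set.mem_Icc_of_Ioo hx))
    · exact ContinuousOn.stronglyMeasurableAtFilter isOpen_Ioi
        (ha_cont.mono Set.Ioi_subset_Ici_self) x hx.1
    · exact ha_cont.continuousAt (Ici_mem_nhds hx.1)
  set E : ℝ := Real.exp ((1 / 2) * A t) with hE_def
  set I : ℝ := (1 / 2) * ∫ s in t₀..t, b s * Real.exp ((1 / 2) * ∫ r in s..t, a r) with hI_def
  have hE_pos : 0 < E := Real.exp_pos _
  have hI_nonneg : 0 ≤ I := by
    apply mul_nonneg (by norm_num)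
    apply intervalIntegral.integral_nonneg ht
    intro s hs
    exact mul_nonneg (hb_nonneg s hs.1) (Real.exp_pos _).le
  have key : ∀ ε > (0:ℝ), u t ≤ (Real.sqrt (c + ε) * E + I) ^ 2 := by
    intro ε hε
    set v : ℝ → ℝ := fun x => c + ε + ∫ s in t₀..x, f s with hv_def
    have hv_pos : ∀ x ∈ Set.Icc t₀ t, 0 < v x := by
      intro x hx
      have h1 : 0 ≤ ∫ s in t₀..x, f s :=
        intervalIntegral.integral_nonneg hx.1 (fun s hs => hf_nonneg s hs.1)
      simp only [hv_def]; linarith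
    have huv : ∀ x ∈ Set.Icc t₀ t, u x ≤ v x := by
      intro x hx
      have := hineq x hx.1
      simp only [hv_def]; linarith
    set w : ℝ → ℝ := fun x => Real.sqrt (v x) with hw_def
    set e : ℝ → ℝ := fun x => Real.exp (-((1 / 2) * A x)) with he_def
    set g : ℝ → ℝ := fun s => (b s / 2) * e s with hg_def
    have heA_cont : ContinuousOn e (Set.Icc t₀ t) :=
      Real.continuous_exp.comp_continuousOn ((continuousOn_const.mul hA_cont).neg)
    have hg_cont : ContinuousOn g (Set.Icc t₀ t) :=
      ((hb_cont.mono hIccSub).div_const 2).mul heA_cont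
    have hg_int : ∀ x ∈ Set.Icc t₀ t, IntervalIntegrable g volume t₀ x := by
      intro x hx
      apply ContinuousOn.intervalIntegrable
      apply hg_cont.mono
      rw [Set.uIcc_of_le hx.1]
      exact Set.Icc_subset_Icc le_rfl hx.2
    set G : ℝ → ℝ := fun x => ∫ s in t₀..x, g s with hG_def
    set F : ℝ → ℝ := fun x => w x * e x - G x with hF_def
    have hF_cont : ContinuousOn F (Set.Icc t₀ t) := by
      apply ContinuousOn.sub
      · apply ContinuousOn.mul
        · apply Real.continuous_sqrt.comp_continuousOn
          apply ContinuousOn.add continuousOn_const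
          have hint : MeasureTheory.IntegrableOn f (Set.uIcc t₀ t) volume := by
            rw [Set.uIcc_of_le ht]; exact (hf_cont.mono hIccSub).integrableOn_Icc
          have := intervalIntegral.continuousOn_primitive_interval hint
          rwa [Set.uIcc_of_le ht] at this
        · exact heA_cont
      · have hint : MeasureTheory.IntegrableOn g (Set.uIcc t₀ t) volume := by
          rw [Set.uIcc_of_le ht]; exact hg_cont.integrableOn_Icc
        have := intervalIntegral.continuousOn_primitive_interval hint
        rwa [Set.uIcc_of_le ht] at this
    have hF_deriv : ∀ x ∈ Set.Ioo t₀ t, HasDerivAt F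
        ((1 / (2 * Real.sqrt (v x)) * f x) * e x
          + w x * (Real.exp (-((1 / 2) * A x)) * (-((1 / 2) * a x))) - g x) x := by
      intro x hx
      have hxIcc : x ∈ Set.Icc t₀ t := Set.mem_Icc_of_Ioo hx
      have hv' : HasDerivAt v (f x) x := by
        apply HasDerivAt.const_add
        apply intervalIntegral.integral_hasDerivAt_right (hf_int x hxIcc)
        · exact ContinuousOn.stronglyMeasurableAtFilter isOpen_Ioi
            (hf_cont.mono Set.Ioi_subset_Ici_self) x hx.1
        · exact hf_cont.continuousAt (Ici_mem_nhds hx.1)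
      have hw' : HasDerivAt w (1 / (2 * Real.sqrt (v x)) * f x) x :=
        (Real.hasDerivAt_sqrt (hv_pos x hxIcc).ne').comp x hv'
      have hA' : HasDerivAt A (a x) x := hA_deriv x hx
      have he' : HasDerivAt e (Real.exp (-((1 / 2) * A x)) * (-((1 / 2) * a x))) x :=
        ((hA'.const_mul (1/2 : ℝ)).neg).exp
      have hG' : HasDerivAt G (g x) x := by
        apply intervalIntegral.integral_hasDerivAt_right (hg_int x hxIcc)
        · apply ContinuousOn.stronglyMeasurableAtFilter isOpen_Ioo
            (hg_cont.mono Set.Ioo_subset_Icc_self) x hx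
        · -- g continuous at x
          have hbx : ContinuousAt b x := hb_cont.continuousAt (Ici_mem_nhds hx.1)
          have hAx : ContinuousAt A x := hA'.continuousAt
          exact (hbx.div_const 2).mul ((hAx.const_smul (1/2:ℝ)).neg.rexp)
      exact (hw'.mul he').sub hG'
    have hF_anti : AntitoneOn F (Set.Icc t₀ t) := by
      apply antitoneOn_of_deriv_nonpos (convex_Icc t₀ t) hF_cont
      · intro x hx
        rw [interior_Icc] at hx
        exact ((hF_deriv x hx).differentiableAt).differentiableWithinAt
      · intro x hx
        rw [interior_Icc] at hx
        rw [(hF_deriv x hx).deriv]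
        have hxIcc : x ∈ Set.Icc t₀ t := Set.mem_Icc_of_Ioo hx
        set s := Real.sqrt (v x) with hs_def
        have hs_pos : 0 < s := Real.sqrt_pos.mpr (hv_pos x hxIcc)
        have hs_sq : s ^ 2 = v x := Real.sq_sqrt (hv_pos x hxIcc).le
        have hex_pos : 0 < e x := Real.exp_pos _
        have hfx : f x ≤ a x * s ^ 2 + b x * s := by
          have h1 : u x ≤ s ^ 2 := by rw [hs_sq]; exact huv x hxIcc
          have h2 : Real.sqrt (u x) ≤ s := Real.sqrt_le_sqrt (huv x hxIcc)
          exact add_le_add (mul_le_mul_of_nonneg_left h1 (ha_nonneg x hxIcc.1))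
            (mul_le_mul_of_nonneg_left h2 (hb_nonneg x hxIcc.1))
        have hwx : w x = s := rfl
        have heq : (1 / (2 * s) * f x) * e x + s * (Real.exp (-((1 / 2) * A x)) * (-((1 / 2) * a x)))
            - (b x / 2) * e x = e x / (2 * s) * (f x - a x * s ^ 2 - b x * s) := by
          have : Real.exp (-((1 / 2) * A x)) = e x := rfl
          rw [this]
          field_simp
          ring
        rw [hwx, hg_def] at *
        rw [heq]
        apply mul_nonpos_of_nonneg_of_nonpos
        · positivity
        · linarith
    have hFt : F t ≤ F t₀ := hF_anti ⟨le_refl t₀, ht⟩ ⟨ht, le_refl t⟩ ht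
    have hFt₀ : F t₀ = Real.sqrt (c + ε) := by
      simp only [hF_def, hG_def, hw_def, hv_def, he_def, hA_def,
        intervalIntegral.integral_same]
      norm_num
    rw [hFt₀] at hFt
    -- hFt : w t * e t - G t ≤ √(c+ε)
    have hwt : w t ≤ (Real.sqrt (c + ε) + G t) * Real.exp ((1/2) * A t) := by
      have h1 : w t * e t ≤ Real.sqrt (c + ε) + G t := by
        simp only [hF_def] at hFt; linarith
      have h2 : e t * Real.exp ((1/2) * A t) = 1 := by
        rw [he_def]; rw [← Real.exp_add]; norm_num
      calc w t = w t * e t * Real.exp ((1/2) * A t) := by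
            rw [mul_assoc, h2, mul_one]
        _ ≤ (Real.sqrt (c + ε) + G t) * Real.exp ((1/2) * A t) := by
            apply mul_le_mul_of_nonneg_right h1 (Real.exp_pos _).le
    have hGE : G t * Real.exp ((1/2) * A t) = I := by
      calc G t * Real.exp ((1/2) * A t)
          = ∫ s in t₀..t, g s * Real.exp ((1/2) * A t) :=
            (intervalIntegral.integral_mul_const _ _).symm
        _ = ∫ s in t₀..t, (1/2) * (b s * Real.exp ((1 / 2) * ∫ r in s..t, a r)) := by
            apply intervalIntegral.integral_congr
            intro s hs
            rw [Set.uIcc_of_le ht] at hs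
            have hAdiff : A t - A s = ∫ r in s..t, a r :=
              intervalIntegral.integral_interval_sub_left (ha_int t ⟨ht, le_refl t⟩)
                (ha_int s hs)
            have hexp : e s * Real.exp ((1/2) * A t)
                = Real.exp ((1/2) * ∫ r in s..t, a r) := by
              rw [he_def, ← Real.exp_add, ← hAdiff]; ring_nf
            show b s / 2 * e s * Real.exp ((1/2) * A t)
              = (1/2) * (b s * Real.exp ((1 / 2) * ∫ r in s..t, a r))
            rw [mul_assoc, hexp]; ring
        _ = I := by rw [hI_def, intervalIntegral.integral_const_mul]
    have hwt2 : w t ≤ Real.sqrt (c + ε) * E + I := by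
      rw [hE_def]
      calc w t ≤ (Real.sqrt (c + ε) + G t) * Real.exp ((1/2) * A t) := hwt
        _ = Real.sqrt (c + ε) * Real.exp ((1/2) * A t) + G t * Real.exp ((1/2) * A t) := by ring
        _ = Real.sqrt (c + ε) * Real.exp ((1/2) * A t) + I := by rw [hGE]
    calc u t ≤ v t := huv t ⟨ht, le_refl t⟩
      _ = (w t) ^ 2 := (Real.sq_sqrt (hv_pos t ⟨ht, le_refl t⟩).le).symm
      _ ≤ (Real.sqrt (c + ε) * E + I) ^ 2 :=
          pow_le_pow_left₀ (Real.sqrt_nonneg _) hwt2 2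
  -- limit ε → 0⁺
  have hlim : Tendsto (fun ε => (Real.sqrt (c + ε) * E + I) ^ 2) (𝓝[>] (0:ℝ))
      (𝓝 ((Real.sqrt c * E + I) ^ 2)) := by
    have hcont : Continuous (fun ε : ℝ => (Real.sqrt (c + ε) * E + I) ^ 2) := by
      continuity
    have := hcont.tendsto 0
    simp only [add_zero] at this
    exact this.mono_left nhdsWithin_le_nhds
  have : ∀ᶠ ε in 𝓝[>] (0:ℝ), u t ≤ (Real.sqrt (c + ε) * E + I) ^ 2 :=
    eventually_nhdsWithin_of_forall (fun ε hε => key ε hε)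
  exact ge_of_tendsto hlim this
end

section
/- (Perov inequality, general sublinear case.) Let 0 ≤ α < 1, c ≥ 0, and let u, a, b : [t₀, ∞) → ℝ be continuous nonnegative functions. If u(t) ≤ c + ∫_{t₀}^t (a(s)·u(s) + b(s)·u(s)^α) ds for all t ≥ t₀, then u(t) ≤ ( c^{1-α}·exp((1-α)∫_{t₀}^t a(s) ds) + (1-α)∫_{t₀}^t b(s)·exp((1-α)∫_s^t a(r) dr) ds )^{1/(1-α)}. -/
open Set intervalIntegral MeasureTheory

lemma perov_aux {t₀ : ℝ} {α c : ℝ} (hα0 : 0 ≤ α) (hα1 : α < 1) (hc : 0 < c)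
    (u a b : ℝ → ℝ)
    (hu_cont : ContinuousOn u (Set.Ici t₀))
    (ha_cont : ContinuousOn a (Set.Ici t₀))
    (hb_cont : ContinuousOn b (Set.Ici t₀))
    (hu_nonneg : ∀ t ∈ Set.Ici t₀, 0 ≤ u t)
    (ha_nonneg : ∀ t ∈ Set.Ici t₀, 0 ≤ a t)
    (hb_nonneg : ∀ t ∈ Set.Ici t₀, 0 ≤ b t)
    (hineq : ∀ t ∈ Set.Ici t₀,
      u t ≤ c + ∫ s in t₀..t, (a s * u s + b s * u s ^ α)) :
    ∀ t ∈ Set.Ici t₀,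
      u t ≤ (c ^ (1 - α) * Real.exp ((1 - α) * ∫ s in t₀..t, a s)
        + (1 - α) * ∫ s in t₀..t, b s * Real.exp ((1 - α) * ∫ r in s..t, a r))
          ^ (1 / (1 - α)) := by
  have hβ : (0:ℝ) < 1 - α := by linarith
  intro T hT
  rcases eq_or_lt_of_le (Set.mem_Ici.mp hT) with rfl | hTlt
  · -- T = t₀ case
    have h := hineq t₀ Set.self_mem_Ici
    simp only [intervalIntegral.integral_same, add_zero, mul_zero] at h ⊢
    calc u t₀ ≤ c := h
      _ = (c ^ (1-α) * Real.exp 0) ^ (1/(1-α)) := by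
          rw [Real.exp_zero, mul_one, ← Real.rpow_mul hc.le,
            mul_one_div_cancel hβ.ne', Real.rpow_one]
  · -- main case t₀ < T
    set β := 1 - α with hβdef
    set F : ℝ → ℝ := fun s => a s * u s + b s * u s ^ α with hFdef
    set v : ℝ → ℝ := fun t => c + ∫ s in t₀..t, F s with hvdef
    set A : ℝ → ℝ := fun t => ∫ s in t₀..t, a s with hAdef
    set G : ℝ → ℝ := fun s => b s * Real.exp (-(β * A s)) with hGdef
    set φ : ℝ → ℝ := fun t => v t ^ β * Real.exp (-(β * A t)) - β * ∫ s in t₀..t, G s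
      with hphidef
    -- continuity of F
    have hFcont : ContinuousOn F (Set.Ici t₀) := by
      apply ContinuousOn.add (ha_cont.mul hu_cont)
      exact hb_cont.mul (hu_cont.rpow_const fun x hx => Or.inr hα0)
    have hFnonneg : ∀ x ∈ Set.Ici t₀, 0 ≤ F x := fun x hx =>
      add_nonneg (mul_nonneg (ha_nonneg x hx) (hu_nonneg x hx))
        (mul_nonneg (hb_nonneg x hx) (Real.rpow_nonneg (hu_nonneg x hx) α))
    -- integrability helpers
    have hIccIci : ∀ x ∈ Set.Ici t₀, Set.Icc t₀ x ⊆ Set.Ici t₀ := fun x hx =>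
      Set.Icc_subset_Ici_self
    have haint : ∀ x ∈ Set.Ici t₀, IntervalIntegrable a MeasureTheory.volume t₀ x := by
      intro x hx
      apply ContinuousOn.intervalIntegrable
      rw [Set.uIcc_of_le hx]
      exact ha_cont.mono (hIccIci x hx)
    have hFint : ∀ x ∈ Set.Ici t₀, IntervalIntegrable F MeasureTheory.volume t₀ x := by
      intro x hx
      apply ContinuousOn.intervalIntegrable
      rw [Set.uIcc_of_le hx]
      exact hFcont.mono (hIccIci x hx)
    -- v positive, u ≤ v
    have hvpos : ∀ x ∈ Set.Ici t₀, 0 < v x := by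
      intro x hx
      have : (0:ℝ) ≤ ∫ s in t₀..x, F s := by
        apply intervalIntegral.integral_nonneg hx
        intro s hs
        exact hFnonneg s (hIccIci x hx hs)
      simp only [hvdef]
      linarith
    have huv : ∀ x ∈ Set.Ici t₀, u x ≤ v x := hineq
    -- derivatives of primitives on Ioi t₀
    have hAderiv : ∀ x ∈ Set.Ioi t₀, HasDerivAt A (a x) x := by
      intro x hx
      exact intervalIntegral.integral_hasDerivAt_right (haint x (Set.mem_Ici.mpr (le_of_lt (Set.mem_Ioi.mp hx))))
        (ContinuousOn.stronglyMeasurableAtFilter isOpen_Ioi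
          (ha_cont.mono Set.Ioi_subset_Ici_self) x hx)
        (ha_cont.continuousAt (Ici_mem_nhds hx))
    have hvderiv : ∀ x ∈ Set.Ioi t₀, HasDerivAt v (F x) x := by
      intro x hx
      exact HasDerivAt.const_add c
        (intervalIntegral.integral_hasDerivAt_right (hFint x (Set.mem_Ici.mpr (le_of_lt (Set.mem_Ioi.mp hx))))
          (ContinuousOn.stronglyMeasurableAtFilter isOpen_Ioi
            (hFcont.mono Set.Ioi_subset_Ici_self) x hx)
          (hFcont.continuousAt (Ici_mem_nhds hx)))
    -- continuity of A on Ici t₀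
    have hAcont : ContinuousOn A (Set.Ici t₀) := by
      intro y hy
      have hy' : t₀ ≤ y := hy
      have h1 : ContinuousOn A (Set.Icc t₀ (y+1)) := by
        have hle : t₀ ≤ y + 1 := by linarith
        have := intervalIntegral.continuousOn_primitive_interval
          (f := a) (μ := MeasureTheory.volume) (a := t₀) (b := y + 1)
          (by rw [Set.uIcc_of_le hle]
              exact (ha_cont.mono (hIccIci (y+1) hle)).integrableOn_Icc)
        rwa [Set.uIcc_of_le hle] at this
      have h2 : Set.Icc t₀ (y+1) ∈ nhdsWithin y (Set.Ici t₀) := by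
        rw [← Set.Ici_inter_Iic]
        exact Filter.inter_mem self_mem_nhdsWithin
          (mem_nhdsWithin_of_mem_nhds (Iic_mem_nhds (by linarith)))
      exact (h1.continuousWithinAt ⟨hy', by linarith⟩).mono_of_mem_nhdsWithin h2
    have hGcont : ContinuousOn G (Set.Ici t₀) := by
      apply hb_cont.mul
      exact Real.continuous_exp.comp_continuousOn ((continuousOn_const.mul hAcont).neg)
    have hGnonneg : ∀ x ∈ Set.Ici t₀, 0 ≤ G x := fun x hx =>
      mul_nonneg (hb_nonneg x hx) (Real.exp_pos _).le
    have hGint : ∀ x ∈ Set.Ici t₀, IntervalIntegrable G MeasureTheory.volume t₀ x := by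
      intro x hx
      apply ContinuousOn.intervalIntegrable
      rw [Set.uIcc_of_le hx]
      exact hGcont.mono (hIccIci x hx)
    have hGderiv : ∀ x ∈ Set.Ioi t₀, HasDerivAt (fun t => ∫ s in t₀..t, G s) (G x) x := by
      intro x hx
      exact intervalIntegral.integral_hasDerivAt_right (hGint x (Set.mem_Ici.mpr (le_of_lt (Set.mem_Ioi.mp hx))))
        (ContinuousOn.stronglyMeasurableAtFilter isOpen_Ioi
          (hGcont.mono Set.Ioi_subset_Ici_self) x hx)
        (hGcont.continuousAt (Ici_mem_nhds hx))
    -- derivative of φ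
    have hphideriv : ∀ x ∈ Set.Ioi t₀, HasDerivAt φ
        ((F x * β * v x ^ (β-1)) * Real.exp (-(β * A x))
          + v x ^ β * (Real.exp (-(β * A x)) * (-(β * a x)))
          - β * G x) x := by
      intro x hx
      have h1 := (hvderiv x hx).rpow_const (p := β) (Or.inl (hvpos x (Set.mem_Ici.mpr (le_of_lt (Set.mem_Ioi.mp hx)))).ne')
      have h2 := (((hAderiv x hx).const_mul β).neg).exp
      exact ((h1.mul h2).sub ((hGderiv x hx).const_mul β))
    -- the derivative is nonpositive
    have hDnonpos : ∀ x ∈ Set.Ioi t₀,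
        (F x * β * v x ^ (β-1)) * Real.exp (-(β * A x))
          + v x ^ β * (Real.exp (-(β * A x)) * (-(β * a x)))
          - β * G x ≤ 0 := by
      intro x hx
      have hxI : x ∈ Set.Ici t₀ := Set.mem_Ici.mpr (le_of_lt (Set.mem_Ioi.mp hx))
      have hvx : 0 < v x := hvpos x hxI
      have hvpow : v x ^ β = v x * v x ^ (β - 1) := by
        nth_rewrite 1 [show β = 1 + (β - 1) by ring]
        rw [Real.rpow_add hvx, Real.rpow_one]
      have huα : u x ^ α ≤ v x ^ α :=
        Real.rpow_le_rpow (hu_nonneg x hxI) (huv x hxI) hα0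
      have hvαβ : v x ^ α * v x ^ (β - 1) = 1 := by
        rw [← Real.rpow_add hvx, show α + (β - 1) = 0 by rw [hβdef]; ring, Real.rpow_zero]
      have key : F x * v x ^ (β - 1) ≤ a x * v x ^ β + b x := by
        have hpow_nonneg : (0:ℝ) ≤ v x ^ (β - 1) := Real.rpow_nonneg hvx.le _
        have e1 : a x * u x * v x ^ (β - 1) ≤ a x * v x ^ β := by
          rw [hvpow, ← mul_assoc]
          exact mul_le_mul_of_nonneg_right
            (mul_le_mul_of_nonneg_left (huv x hxI) (ha_nonneg x hxI)) hpow_nonneg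
        have e2 : b x * u x ^ α * v x ^ (β - 1) ≤ b x := by
          calc b x * u x ^ α * v x ^ (β - 1)
              ≤ b x * v x ^ α * v x ^ (β - 1) :=
                mul_le_mul_of_nonneg_right
                  (mul_le_mul_of_nonneg_left huα (hb_nonneg x hxI)) hpow_nonneg
            _ = b x * (v x ^ α * v x ^ (β - 1)) := by ring
            _ = b x := by rw [hvαβ, mul_one]
        calc F x * v x ^ (β - 1)
            = a x * u x * v x ^ (β - 1) + b x * u x ^ α * v x ^ (β - 1) := by
              simp only [hFdef]; ring
          _ ≤ a x * v x ^ β + b x := add_le_add e1 e2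
      have hrw : (F x * β * v x ^ (β-1)) * Real.exp (-(β * A x))
          + v x ^ β * (Real.exp (-(β * A x)) * (-(β * a x)))
          - β * G x
          = β * Real.exp (-(β * A x)) * (F x * v x ^ (β-1) - (a x * v x ^ β + b x)) := by
        simp only [hGdef]; ring
      rw [hrw]
      exact mul_nonpos_of_nonneg_of_nonpos (by positivity) (sub_nonpos.2 key)
    -- continuity of the primitives of F and G on Ici t₀
    have hprim : ∀ f : ℝ → ℝ, ContinuousOn f (Set.Ici t₀) →
        ContinuousOn (fun t => ∫ s in t₀..t, f s) (Set.Ici t₀) := by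
      intro f hf y hy
      have hy' : t₀ ≤ y := hy
      have hle : t₀ ≤ y + 1 := by linarith
      have h1 : ContinuousOn (fun t => ∫ s in t₀..t, f s) (Set.Icc t₀ (y+1)) := by
        have := intervalIntegral.continuousOn_primitive_interval
          (f := f) (μ := MeasureTheory.volume) (a := t₀) (b := y + 1)
          (by rw [Set.uIcc_of_le hle]
              exact (hf.mono (hIccIci (y+1) hle)).integrableOn_Icc)
        rwa [Set.uIcc_of_le hle] at this
      have h2 : Set.Icc t₀ (y+1) ∈ nhdsWithin y (Set.Ici t₀) := by
        rw [← Set.Ici_inter_Iic]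
        exact Filter.inter_mem self_mem_nhdsWithin
          (mem_nhdsWithin_of_mem_nhds (Iic_mem_nhds (by linarith)))
      exact (h1.continuousWithinAt ⟨hy', by linarith⟩).mono_of_mem_nhdsWithin h2
    have hvcont : ContinuousOn v (Set.Ici t₀) := continuousOn_const.add (hprim F hFcont)
    have hphicont : ContinuousOn φ (Set.Ici t₀) := by
      apply ContinuousOn.sub
      · exact (hvcont.rpow_const fun x hx => Or.inr hβ.le).mul
          (Real.continuous_exp.comp_continuousOn ((continuousOn_const.mul hAcont).neg))
      · exact continuousOn_const.mul (hprim G hGcont)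
    -- φ is antitone on Icc t₀ T
    have hanti : AntitoneOn φ (Set.Icc t₀ T) := by
      apply antitoneOn_of_deriv_nonpos (convex_Icc t₀ T)
        (hphicont.mono (hIccIci T hT))
      · intro x hx
        rw [interior_Icc] at hx
        exact ((hphideriv x hx.1).differentiableAt).differentiableWithinAt
      · intro x hx
        rw [interior_Icc] at hx
        rw [(hphideriv x hx.1).deriv]
        exact hDnonpos x hx.1
    have hphiT : φ T ≤ φ t₀ :=
      hanti (Set.left_mem_Icc.2 hTlt.le) (Set.right_mem_Icc.2 hTlt.le) hTlt.le
    have hphit0 : φ t₀ = c ^ β := by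
      simp only [hphidef, hvdef, hAdef, intervalIntegral.integral_same, mul_zero,
        neg_zero, Real.exp_zero, mul_one, add_zero, sub_zero]
    have hE : (0:ℝ) < Real.exp (β * A T) := Real.exp_pos _
    have h5 : v T ^ β * (Real.exp (β * A T))⁻¹ ≤ c ^ β + β * ∫ s in t₀..T, G s := by
      rw [← Real.exp_neg]
      rw [hphit0] at hphiT
      simp only [hphidef] at hphiT
      linarith
    have h3 : v T ^ β ≤ (c ^ β + β * ∫ s in t₀..T, G s) * Real.exp (β * A T) := by
      calc v T ^ β = v T ^ β * (Real.exp (β * A T))⁻¹ * Real.exp (β * A T) := by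
            field_simp
        _ ≤ (c ^ β + β * ∫ s in t₀..T, G s) * Real.exp (β * A T) :=
            mul_le_mul_of_nonneg_right h5 hE.le
    -- rewrite the integral
    have hint_eq : Real.exp (β * A T) * ∫ s in t₀..T, G s
        = ∫ s in t₀..T, b s * Real.exp (β * ∫ r in s..T, a r) := by
      rw [← intervalIntegral.integral_const_mul]
      apply intervalIntegral.integral_congr
      intro s hs
      rw [Set.uIcc_of_le hTlt.le] at hs
      have hs0 : s ∈ Set.Ici t₀ := hs.1
      have hint2 : IntervalIntegrable a MeasureTheory.volume s T := by
        apply ContinuousOn.intervalIntegrable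
        rw [Set.uIcc_of_le hs.2]
        exact ha_cont.mono (fun z hz => le_trans hs.1 hz.1)
      have hadj : A s + ∫ r in s..T, a r = A T :=
        intervalIntegral.integral_add_adjacent_intervals (haint s hs0) hint2
      have h6 : ∫ r in s..T, a r = A T - A s := by linarith
      simp only [hGdef]
      rw [h6, show β * (A T - A s) = β * A T + -(β * A s) by ring, Real.exp_add]
      ring
    -- conclude
    have hvT : 0 < v T := hvpos T hT
    have h7 : v T ^ β ≤ c ^ β * Real.exp (β * A T)
        + β * ∫ s in t₀..T, b s * Real.exp (β * ∫ r in s..T, a r) := by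
      rw [← hint_eq]
      calc v T ^ β ≤ (c ^ β + β * ∫ s in t₀..T, G s) * Real.exp (β * A T) := h3
        _ = c ^ β * Real.exp (β * A T)
            + β * (Real.exp (β * A T) * ∫ s in t₀..T, G s) := by ring
    show u T ≤ (c ^ β * Real.exp (β * A T)
        + β * ∫ s in t₀..T, b s * Real.exp (β * ∫ r in s..T, a r)) ^ (1/β)
    calc u T ≤ v T := huv T hT
      _ = (v T ^ β) ^ (1/β) := by
          rw [← Real.rpow_mul hvT.le, mul_one_div_cancel hβ.ne', Real.rpow_one]
      _ ≤ _ := Real.rpow_le_rpow (Real.rpow_nonneg hvT.le β) h7 (by positivity)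

theorem perov_inequality {t₀ : ℝ} {α c : ℝ} (hα0 : 0 ≤ α) (hα1 : α < 1) (hc : 0 ≤ c)
    (u a b : ℝ → ℝ)
    (hu_cont : ContinuousOn u (Set.Ici t₀))
    (ha_cont : ContinuousOn a (Set.Ici t₀))
    (hb_cont : ContinuousOn b (Set.Ici t₀))
    (hu_nonneg : ∀ t ∈ Set.Ici t₀, 0 ≤ u t)
    (ha_nonneg : ∀ t ∈ Set.Ici t₀, 0 ≤ a t)
    (hb_nonneg : ∀ t ∈ Set.Ici t₀, 0 ≤ b t)
    (hineq : ∀ t ∈ Set.Ici t₀,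
      u t ≤ c + ∫ s in t₀..t, (a s * u s + b s * u s ^ α)) :
    ∀ t ∈ Set.Ici t₀,
      u t ≤ (c ^ (1 - α) * Real.exp ((1 - α) * ∫ s in t₀..t, a s)
        + (1 - α) * ∫ s in t₀..t, b s * Real.exp ((1 - α) * ∫ r in s..t, a r))
          ^ (1 / (1 - α)) := by
  intro t ht
  have hβ : (0:ℝ) < 1 - α := by linarith
  set E : ℝ := Real.exp ((1 - α) * ∫ s in t₀..t, a s) with hE
  set I : ℝ := (1 - α) * ∫ s in t₀..t, b s * Real.exp ((1 - α) * ∫ r in s..t, a r) with hI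
  set f : ℝ → ℝ := fun ε => ((c + ε) ^ (1 - α) * E + I) ^ (1 / (1 - α)) with hf
  have hstep : ∀ ε > (0:ℝ), u t ≤ f ε := by
    intro ε hε
    have hcε : 0 < c + ε := by linarith
    have hineq' : ∀ t' ∈ Set.Ici t₀,
        u t' ≤ (c + ε) + ∫ s in t₀..t', (a s * u s + b s * u s ^ α) := by
      intro t' ht'
      have := hineq t' ht'
      linarith
    exact perov_aux hα0 hα1 hcε u a b hu_cont ha_cont hb_cont hu_nonneg ha_nonneg
      hb_nonneg hineq' t ht
  have hcont : ContinuousAt f 0 := by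
    apply ContinuousAt.rpow_const
    · apply ContinuousAt.add _ continuousAt_const
      apply ContinuousAt.mul _ continuousAt_const
      exact (Real.continuousAt_rpow_const (c + 0) (1 - α) (Or.inr hβ.le)).comp
        (continuousAt_const.add continuousAt_id)
    · right; positivity
  have htend : Filter.Tendsto f (nhdsWithin 0 (Set.Ioi 0)) (nhds (f 0)) :=
    hcont.continuousWithinAt
  have hev : ∀ᶠ ε in nhdsWithin 0 (Set.Ioi 0), u t ≤ f ε :=
    eventually_nhdsWithin_of_forall hstep
  have := ge_of_tendsto htend hev
  simpa only [hf, add_zero] using this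
end

section
/- (Stability of second order dynamical systems governed by cocoercive operators.) Let H be a real Hilbert space, γ > 0, and for each parameter λ let A_λ : H → H be α_λ-cocoercive with 1/α_λ < γ, and suppose ‖A_λ(u) − A(u)‖ ≤ L'·δ for all u ∈ H, where δ ≥ 0. If x and x_λ are C² solutions on [0,T] of x'' + γx' + A x = 0 with x(0)=u₀, x'(0)=v₀, and x_λ'' + γx_λ' + A_λ x_λ = 0 with x_λ(0)=u_{0,λ}, x_λ'(0)=v_{0,λ}, then for all t ∈ [0,T]: ‖x_λ(t) − x(t)‖ ≤ (1 + γ(2/(2+γT))²(e^{(2+γT)t/2} − 1 − t))‖u_{0,λ} − u₀‖ + (2/(2+γT))(e^{(2+γT)t/2} − 1)‖v_{0,λ} − v₀‖ + L'(2/(2+γT))²(e^{(2+γT)t/2} − 1 − t)·δ. -/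
open Real Set MeasureTheory intervalIntegral Filter

lemma aux_nonneg_of_deriv {f f' : ℝ → ℝ} {a : ℝ}
    (hf : ∀ s, HasDerivAt f (f' s) s) (h0 : 0 ≤ f a)
    (hd : ∀ s, a ≤ s → 0 ≤ f' s) : ∀ s, a ≤ s → 0 ≤ f s := by
  intro s hs
  have hmono : MonotoneOn f (Ici a) := by
    apply monotoneOn_of_deriv_nonneg (convex_Ici a)
    · exact fun x _ => (hf x).continuousAt.continuousWithinAt
    · exact fun x _ => (hf x).differentiableAt.differentiableWithinAt
    · intro x hx
      rw [(hf x).deriv]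
      exact hd x (le_of_lt (by simpa using hx))
  exact h0.trans (hmono self_mem_Ici hs hs)

lemma aux_L1 {s : ℝ} (hs : 0 ≤ s) : Real.cosh s - 1 ≤ s * Real.sinh s := by
  have := aux_nonneg_of_deriv (f := fun s => s * Real.sinh s - (Real.cosh s - 1))
    (f' := fun s => s * Real.cosh s)
    (fun s => by
      have h1 := (hasDerivAt_id' (x:=s)).mul (Real.hasDerivAt_sinh s)
      have h2 := (Real.hasDerivAt_cosh s).sub_const 1
      exact (h1.sub h2).congr_deriv (by ring))
    (by simp) (fun s hs => mul_nonneg hs (Real.cosh_pos s).le) s hs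
  linarith

lemma aux_L2 {s : ℝ} (hs : 0 ≤ s) : Real.sinh s ≤ s * Real.cosh s := by
  have := aux_nonneg_of_deriv (f := fun s => s * Real.cosh s - Real.sinh s)
    (f' := fun s => s * Real.sinh s)
    (fun s => by
      have h1 := (hasDerivAt_id' (x:=s)).mul (Real.hasDerivAt_cosh s)
      exact (h1.sub (Real.hasDerivAt_sinh s)).congr_deriv (by ring))
    (by simp) (fun s hs => mul_nonneg hs (Real.sinh_nonneg_iff.mpr hs)) s hs
  linarith

lemma aux_L3 {s : ℝ} (hs : 0 ≤ s) : Real.sinh s ≤ s * Real.exp (s ^ 2 / 2) := by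
  have key : ∀ s, 0 ≤ s → 0 ≤ s - Real.exp (-(s ^ 2 / 2)) * Real.sinh s := by
    apply aux_nonneg_of_deriv
      (f' := fun s => 1 + s * (Real.exp (-(s ^ 2 / 2)) * Real.sinh s)
        - Real.exp (-(s ^ 2 / 2)) * Real.cosh s)
    · intro s
      have hexp : HasDerivAt (fun s : ℝ => Real.exp (-(s ^ 2 / 2)))
          (Real.exp (-(s ^ 2 / 2)) * (-s)) s := by
        have h1 : HasDerivAt (fun s : ℝ => -(s ^ 2 / 2)) (-s) s := by
          have := ((hasDerivAt_pow 2 s).div_const 2).neg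
          exact (this).congr_deriv (by push_cast; ring)
        exact h1.exp
      have := (hasDerivAt_id' (x:=s)).sub (hexp.mul (Real.hasDerivAt_sinh s))
      exact (this).congr_deriv (by ring)
    · simp
    · intro s hs
      have h1 : Real.exp (-(s ^ 2 / 2)) ≤ 1 := by
        apply Real.exp_le_one_iff.mpr; nlinarith
      have h2 : Real.exp (-(s ^ 2 / 2)) * Real.cosh s
          ≤ Real.exp (-(s ^ 2 / 2)) * (1 + s * Real.sinh s) := by
        apply mul_le_mul_of_nonneg_left (by nlinarith [aux_L1 hs]) (Real.exp_pos _).le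
      have h3 : Real.exp (-(s ^ 2 / 2)) * (1 + s * Real.sinh s)
          ≤ 1 + s * (Real.exp (-(s ^ 2 / 2)) * Real.sinh s) := by
        have := mul_nonneg hs (Real.sinh_nonneg_iff.mpr hs)
        nlinarith
      linarith
  have h := key s hs
  have hpos := Real.exp_pos (s ^ 2 / 2)
  have : Real.exp (-(s ^ 2 / 2)) = (Real.exp (s ^ 2 / 2))⁻¹ := by
    rw [Real.exp_neg]
  rw [this] at h
  have := mul_le_mul_of_nonneg_left (by linarith : (Real.exp (s ^ 2 / 2))⁻¹ * Real.sinh s ≤ s) hpos.le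
  calc Real.sinh s = Real.exp (s ^ 2 / 2) * ((Real.exp (s ^ 2 / 2))⁻¹ * Real.sinh s) := by
        field_simp
    _ ≤ Real.exp (s ^ 2 / 2) * s := this
    _ = s * Real.exp (s ^ 2 / 2) := by ring

lemma aux_L4 {s : ℝ} (hs : 0 ≤ s) : Real.cosh s ≤ Real.exp (s ^ 2 / 2) := by
  have := aux_nonneg_of_deriv (f := fun s => Real.exp (s ^ 2 / 2) - Real.cosh s)
    (f' := fun s => s * Real.exp (s ^ 2 / 2) - Real.sinh s)
    (fun s => by
      have h1 : HasDerivAt (fun s : ℝ => s ^ 2 / 2) s s := by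
        have := (hasDerivAt_pow 2 s).div_const 2
        exact (this).congr_deriv (by push_cast; ring)
      have := (h1.exp).sub (Real.hasDerivAt_cosh s)
      exact (this).congr_deriv (by ring))
    (by simp) (fun s hs => by have := aux_L3 hs; linarith) s hs
  linarith

lemma aux_LA {s : ℝ} (hs : 0 ≤ s) : s / 2 * Real.sinh s ≤ Real.exp (s ^ 2 / 2) - 1 := by
  have := aux_nonneg_of_deriv
    (f := fun s => Real.exp (s ^ 2 / 2) - 1 - s / 2 * Real.sinh s)
    (f' := fun s => s * Real.exp (s ^ 2 / 2) - (1 / 2 * Real.sinh s + s / 2 * Real.cosh s))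
    (fun s => by
      have h1 : HasDerivAt (fun s : ℝ => s ^ 2 / 2) s s := by
        have := (hasDerivAt_pow 2 s).div_const 2
        exact (this).congr_deriv (by push_cast; ring)
      have h2 := (h1.exp).sub_const 1
      have h3 := ((hasDerivAt_id' (x:=s)).div_const 2).mul (Real.hasDerivAt_sinh s)
      exact (h2.sub h3).congr_deriv (by ring))
    (by simp)
    (fun s hs => by
      have h2 := aux_L2 hs
      have h4 := aux_L4 hs
      have hc := Real.cosh_pos (x := s)
      nlinarith) s hs
  linarith

lemma aux_LB {s : ℝ} (hs : 0 ≤ s) :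
    s ^ 2 / 4 * (Real.cosh s - 1) ≤ Real.exp (s ^ 2 / 2) - 1 - s ^ 2 / 2 := by
  have := aux_nonneg_of_deriv
    (f := fun s => Real.exp (s ^ 2 / 2) - 1 - s ^ 2 / 2 - s ^ 2 / 4 * (Real.cosh s - 1))
    (f' := fun s => s * Real.exp (s ^ 2 / 2) - s
      - (s / 2 * (Real.cosh s - 1) + s ^ 2 / 4 * Real.sinh s))
    (fun s => by
      have h1 : HasDerivAt (fun s : ℝ => s ^ 2 / 2) s s := by
        have := (hasDerivAt_pow 2 s).div_const 2
        exact (this).congr_deriv (by push_cast; ring)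
      have h1' : HasDerivAt (fun s : ℝ => s ^ 2 / 4) (s / 2) s := by
        have := (hasDerivAt_pow 2 s).div_const 4
        exact (this).congr_deriv (by push_cast; ring)
      have h2 := ((h1.exp).sub_const 1).sub h1
      have h3 := h1'.mul ((Real.hasDerivAt_cosh s).sub_const 1)
      exact (h2.sub h3).congr_deriv (by ring))
    (by simp)
    (fun s hs => by
      have hA := aux_LA hs
      have h4 := aux_L4 hs
      nlinarith) s hs
  linarith

lemma aux_M1num {x : ℝ} (hx : 0 ≤ x) : 0 ≤ x * Real.exp x - Real.exp x + 1 := by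
  apply aux_nonneg_of_deriv (f' := fun x => x * Real.exp x)
    (fun x => by
      have := ((hasDerivAt_id' (x:=x)).mul (Real.hasDerivAt_exp x)).sub (Real.hasDerivAt_exp x)
      exact (this.add_const 1).congr_deriv (by ring))
    (by simp) (fun x hx => mul_nonneg hx (Real.exp_pos x).le) x hx

lemma aux_LN {x : ℝ} (hx : 0 ≤ x) : 0 ≤ x * Real.exp x + x - 2 * Real.exp x + 2 := by
  apply aux_nonneg_of_deriv
    (f' := fun x => x * Real.exp x - Real.exp x + 1)
    (fun x => by
      have h1 := ((hasDerivAt_id' (x:=x)).mul (Real.hasDerivAt_exp x)).add (hasDerivAt_id' (x:=x))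
      have h2 := (Real.hasDerivAt_exp x).const_mul 2
      exact ((h1.sub h2).add_const 2).congr_deriv (by ring))
    (by simp) (fun x hx => aux_M1num hx) x hx

lemma aux_LP {y : ℝ} (hy : 0 ≤ y) : Real.exp y - 1 - y ≤ y ^ 2 * Real.exp y / 2 := by
  have := aux_nonneg_of_deriv
    (f := fun y => y ^ 2 * Real.exp y / 2 - (Real.exp y - 1 - y))
    (f' := fun y => (y * Real.exp y + y ^ 2 * Real.exp y / 2) - (Real.exp y - 1))
    (fun y => by
      have h1 := (((hasDerivAt_pow 2 y).mul (Real.hasDerivAt_exp y)).div_const 2)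
      have h2 := (Real.hasDerivAt_exp y).sub_const 1
      have h3 := h2.sub (hasDerivAt_id' (x:=y))
      exact (h1.sub h3).congr_deriv (by push_cast; ring))
    (by simp)
    (fun y hy => by
      have := aux_M1num hy
      nlinarith [Real.exp_pos y]) y hy
  linarith

lemma aux_M1 {y x : ℝ} (hy : 0 ≤ y) (hxy : y ≤ x) :
    x * (Real.exp y - 1) ≤ y * (Real.exp x - 1) := by
  have := aux_nonneg_of_deriv (a := y)
    (f := fun x => y * (Real.exp x - 1) - x * (Real.exp y - 1))
    (f' := fun x => y * Real.exp x - (Real.exp y - 1))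
    (fun x => by
      have h1 := ((Real.hasDerivAt_exp x).sub_const 1).const_mul y
      have h2 := (hasDerivAt_id' (x:=x)).mul_const (Real.exp y - 1)
      exact (h1.sub h2).congr_deriv (by ring))
    (by simp)
    (fun x hx => by
      have h1 := aux_M1num hy
      have h2 : Real.exp y ≤ Real.exp x := Real.exp_le_exp.mpr hx
      nlinarith) x hxy
  linarith

lemma aux_M2 {y x : ℝ} (hy : 0 ≤ y) (hxy : y ≤ x) :
    x ^ 2 * (Real.exp y - 1 - y) ≤ y ^ 2 * (Real.exp x - 1 - x) := by
  have hd : ∀ x, y ≤ x → 0 ≤ y ^ 2 * (Real.exp x - 1) - 2 * x * (Real.exp y - 1 - y) := by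
    apply aux_nonneg_of_deriv
      (f' := fun x => y ^ 2 * Real.exp x - 2 * (Real.exp y - 1 - y))
      (fun x => by
        have h1 := ((Real.hasDerivAt_exp x).sub_const 1).const_mul (y ^ 2)
        have h2 := ((hasDerivAt_id' (x:=x)).const_mul 2).mul_const (Real.exp y - 1 - y)
        exact (h1.sub h2).congr_deriv (by ring))
      (by
        have := aux_LN hy
        nlinarith)
      (fun x hx => by
        have h1 := aux_LP hy
        have h2 : Real.exp y ≤ Real.exp x := Real.exp_le_exp.mpr hx
        nlinarith)
  have := aux_nonneg_of_deriv (a := y)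
    (f := fun x => y ^ 2 * (Real.exp x - 1 - x) - x ^ 2 * (Real.exp y - 1 - y))
    (f' := fun x => y ^ 2 * (Real.exp x - 1) - 2 * x * (Real.exp y - 1 - y))
    (fun x => by
      have h1 := (((Real.hasDerivAt_exp x).sub_const 1).sub (hasDerivAt_id' (x:=x))).const_mul (y ^ 2)
      have h2 := (hasDerivAt_pow 2 x).mul_const (Real.exp y - 1 - y)
      exact (h1.sub h2).congr_deriv (by push_cast; ring))
    (by simp)
    hd x hxy
  linarith


lemma aux_key3 {γ T t : ℝ} (hγ : 0 < γ) (hT : 0 < T) (ht0 : 0 ≤ t) (htT : t ≤ T) :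
    (Real.cosh (Real.sqrt γ * t) - 1) / γ
      ≤ (Real.exp ((1 + γ * T / 2) * t) - 1 - t) / (1 + γ * T / 2) ^ 2 := by
  have hγT : 0 < γ * T := mul_pos hγ hT
  have hω1 : 1 ≤ 1 + γ * T / 2 := by linarith
  have hωpos : (0:ℝ) < 1 + γ * T / 2 := by linarith
  rcases eq_or_lt_of_le ht0 with h | ht
  · rw [← h]; simp
  · have hμ : 0 < Real.sqrt γ := Real.sqrt_pos.mpr hγ
    have hμ2 : Real.sqrt γ ^ 2 = γ := Real.sq_sqrt hγ.le
    have hss : (Real.sqrt γ * t) ^ 2 = γ * t ^ 2 := by rw [mul_pow, hμ2]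
    have hs2 : (Real.sqrt γ * t) ^ 2 / 2 = γ * t ^ 2 / 2 := by rw [hss]
    have hy : 0 < γ * t ^ 2 / 2 := by positivity
    have hyx : γ * t ^ 2 / 2 ≤ (1 + γ * T / 2) * t := by nlinarith [mul_pos hγ ht]
    have htx : t ≤ (1 + γ * T / 2) * t := by nlinarith
    have hB := aux_LB (mul_pos hμ ht).le
    rw [hs2, hss] at hB
    have hM := aux_M2 hy.le hyx
    have hC : 0 ≤ Real.cosh (Real.sqrt γ * t) - 1 := by
      nlinarith [Real.one_le_cosh (Real.sqrt γ * t)]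
    have hF : 0 ≤ Real.exp ((1 + γ * T / 2) * t) - 1 - (1 + γ * T / 2) * t := by
      nlinarith [Real.add_one_le_exp ((1 + γ * T / 2) * t)]
    set C := Real.cosh (Real.sqrt γ * t) - 1 with hCdef
    set D := Real.exp (γ * t ^ 2 / 2) - 1 - γ * t ^ 2 / 2 with hDdef
    set F := Real.exp ((1 + γ * T / 2) * t) - 1 - (1 + γ * T / 2) * t with hFdef
    -- hB : γ * t ^ 2 / 4 * C ≤ D ; hM : ((1+γT/2)*t)^2 * D ≤ (γt²/2)^2 * F
    have step1 : (1 + γ * T / 2) ^ 2 * t ^ 2 * (γ * t ^ 2 / 4 * C)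
        ≤ (1 + γ * T / 2) ^ 2 * t ^ 2 * D :=
      mul_le_mul_of_nonneg_left hB (by positivity)
    have e1 : (1 + γ * T / 2) ^ 2 * t ^ 2 * (γ * t ^ 2 / 4 * C)
        = γ * t ^ 4 / 4 * ((1 + γ * T / 2) ^ 2 * C) := by ring
    have e2 : (1 + γ * T / 2) ^ 2 * t ^ 2 * D = ((1 + γ * T / 2) * t) ^ 2 * D := by ring
    have e3 : (γ * t ^ 2 / 2) ^ 2 * F = γ * t ^ 4 / 4 * (γ * F) := by ring
    have step3 : (1 + γ * T / 2) ^ 2 * C ≤ γ * F := by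
      have h6 : γ * t ^ 4 / 4 * ((1 + γ * T / 2) ^ 2 * C) ≤ γ * t ^ 4 / 4 * (γ * F) := by
        linarith
      exact le_of_mul_le_mul_left h6 (by positivity)
    rw [div_le_div_iff₀ hγ (by positivity)]
    rw [hFdef] at step3
    rw [hCdef] at step3
    linarith [step3, mul_le_mul_of_nonneg_left htx hγ.le]
  done

lemma aux_key2 {γ T t : ℝ} (hγ : 0 < γ) (hT : 0 < T) (ht0 : 0 ≤ t) (htT : t ≤ T) :
    Real.sinh (Real.sqrt γ * t) / Real.sqrt γ
      ≤ (Real.exp ((1 + γ * T / 2) * t) - 1) / (1 + γ * T / 2) := by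
  have hγT : 0 < γ * T := mul_pos hγ hT
  have hω1 : 1 ≤ 1 + γ * T / 2 := by linarith
  have hωpos : (0:ℝ) < 1 + γ * T / 2 := by linarith
  have hμ : 0 < Real.sqrt γ := Real.sqrt_pos.mpr hγ
  have hμ2 : Real.sqrt γ ^ 2 = γ := Real.sq_sqrt hγ.le
  rcases eq_or_lt_of_le ht0 with h | ht
  · rw [← h]; simp
  · have hss : (Real.sqrt γ * t) ^ 2 = γ * t ^ 2 := by rw [mul_pow, hμ2]
    have hs2 : (Real.sqrt γ * t) ^ 2 / 2 = γ * t ^ 2 / 2 := by rw [hss]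
    have hy : 0 < γ * t ^ 2 / 2 := by positivity
    have hyx : γ * t ^ 2 / 2 ≤ (1 + γ * T / 2) * t := by nlinarith [mul_pos hγ ht]
    have hA := aux_LA (mul_pos hμ ht).le
    rw [hs2] at hA
    have hM := aux_M1 hy.le hyx
    have hsinh : 0 ≤ Real.sinh (Real.sqrt γ * t) :=
      Real.sinh_nonneg_iff.mpr (mul_pos hμ ht).le
    -- hA : √γ*t/2 * sinh ≤ exp (γt²/2) - 1 ; hM : ωt(exp(γt²/2)-1) ≤ (γt²/2)(exp(ωt)-1)
    have step1 : (1 + γ * T / 2) * t * (Real.sqrt γ * t / 2 * Real.sinh (Real.sqrt γ * t))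
        ≤ (1 + γ * T / 2) * t * (Real.exp (γ * t ^ 2 / 2) - 1) :=
      mul_le_mul_of_nonneg_left hA (by positivity)
    have h4 : (1 + γ * T / 2) * t * (Real.sqrt γ * t / 2 * Real.sinh (Real.sqrt γ * t))
        ≤ γ * t ^ 2 / 2 * (Real.exp ((1 + γ * T / 2) * t) - 1) := step1.trans hM
    have h5 := mul_le_mul_of_nonneg_left h4 hμ.le
    have e1 : Real.sqrt γ * ((1 + γ * T / 2) * t * (Real.sqrt γ * t / 2 * Real.sinh (Real.sqrt γ * t)))
        = γ * t ^ 2 / 2 * ((1 + γ * T / 2) * Real.sinh (Real.sqrt γ * t)) := by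
      linear_combination ((1 + γ * T / 2) * t ^ 2 / 2 * Real.sinh (Real.sqrt γ * t)) * hμ2
    have e2 : Real.sqrt γ * (γ * t ^ 2 / 2 * (Real.exp ((1 + γ * T / 2) * t) - 1))
        = γ * t ^ 2 / 2 * (Real.sqrt γ * (Real.exp ((1 + γ * T / 2) * t) - 1)) := by ring
    have step3 : (1 + γ * T / 2) * Real.sinh (Real.sqrt γ * t)
        ≤ Real.sqrt γ * (Real.exp ((1 + γ * T / 2) * t) - 1) := by
      have h6 : γ * t ^ 2 / 2 * ((1 + γ * T / 2) * Real.sinh (Real.sqrt γ * t))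
          ≤ γ * t ^ 2 / 2 * (Real.sqrt γ * (Real.exp ((1 + γ * T / 2) * t) - 1)) := by
        linarith
      exact le_of_mul_le_mul_left h6 (by positivity)
    rw [div_le_div_iff₀ hμ hωpos]
    linarith


set_option maxHeartbeats 1000000 in
theorem cocoercive_dynamical_system_stability {H : Type*} [NormedAddCommGroup H]
    [InnerProductSpace ℝ H] [CompleteSpace H]
    {T γ α αl L' δ : ℝ}
    (hT : 0 < T) (hγ : 0 < γ) (hα : 0 < α) (hαl : 0 < αl)
    (hL' : 0 < L') (hδ : 0 ≤ δ)
    (A Al : H → H)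
    (hA_coco : ∀ u v : H, (inner ℝ (A u - A v) (u - v) : ℝ) ≥ α * ‖A u - A v‖ ^ 2)
    (hAl_coco : ∀ u v : H, (inner ℝ (Al u - Al v) (u - v) : ℝ) ≥ αl * ‖Al u - Al v‖ ^ 2)
    (hαγ : 1 / α < γ) (hαlγ : 1 / αl < γ)
    (hparam : ∀ u : H, ‖Al u - A u‖ ≤ L' * δ)
    (u₀ v₀ u₀l v₀l : H)
    (x x' xl xl' : ℝ → H)
    (hx : ∀ t ∈ Set.Icc (0 : ℝ) T, HasDerivAt x (x' t) t)
    (hx' : ∀ t ∈ Set.Icc (0 : ℝ) T, HasDerivAt x' (-(γ • x' t) - A (x t)) t)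
    (hx0 : x 0 = u₀) (hx'0 : x' 0 = v₀)
    (hxl : ∀ t ∈ Set.Icc (0 : ℝ) T, HasDerivAt xl (xl' t) t)
    (hxl' : ∀ t ∈ Set.Icc (0 : ℝ) T, HasDerivAt xl' (-(γ • xl' t) - Al (xl t)) t)
    (hxl0 : xl 0 = u₀l) (hxl'0 : xl' 0 = v₀l) :
    ∀ t ∈ Set.Icc (0 : ℝ) T,
      ‖xl t - x t‖ ≤
        (1 + γ * (2 / (2 + γ * T)) ^ 2
            * (Real.exp ((2 + γ * T) * t / 2) - 1 - t)) * ‖u₀l - u₀‖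
        + (2 / (2 + γ * T)) * (Real.exp ((2 + γ * T) * t / 2) - 1) * ‖v₀l - v₀‖
        + L' * (2 / (2 + γ * T)) ^ 2
            * (Real.exp ((2 + γ * T) * t / 2) - 1 - t) * δ := by
  have hμ : 0 < Real.sqrt γ := Real.sqrt_pos.mpr hγ
  have hμ2 : Real.sqrt γ ^ 2 = γ := Real.sq_sqrt hγ.le
  set μ := Real.sqrt γ with hμdef
  set a := ‖u₀l - u₀‖ with hadef
  set b := ‖v₀l - v₀‖ with hbdef
  set c := L' * δ with hcdef
  have ha0 : 0 ≤ a := norm_nonneg _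
  have hb0 : 0 ≤ b := norm_nonneg _
  have hc0 : 0 ≤ c := mul_nonneg hL'.le hδ
  set p : ℝ → ℝ := fun s => ‖xl s - x s‖ with hpdef
  clear_value μ a b c p
  -- continuity of the solutions
  have hxC : ContinuousOn x (Set.Icc 0 T) :=
    fun s hs => ((hx s hs).continuousAt).continuousWithinAt
  have hxlC : ContinuousOn xl (Set.Icc 0 T) :=
    fun s hs => ((hxl s hs).continuousAt).continuousWithinAt
  have hx'C : ContinuousOn x' (Set.Icc 0 T) :=
    fun s hs => ((hx' s hs).continuousAt).continuousWithinAt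
  have hxl'C : ContinuousOn xl' (Set.Icc 0 T) :=
    fun s hs => ((hxl' s hs).continuousAt).continuousWithinAt
  have hpC : ContinuousOn p (Set.Icc 0 T) := by rw [hpdef]; exact (hxlC.sub hxC).norm
  -- Lipschitz properties
  have hlip : ∀ (B : H → H) (β : ℝ), 0 < β → 1 / β < γ →
      (∀ u v : H, (inner ℝ (B u - B v) (u - v) : ℝ) ≥ β * ‖B u - B v‖ ^ 2) →
      ∀ w z : H, ‖B w - B z‖ ≤ γ * ‖w - z‖ := by
    intro B β hβ hβγ hco w z
    rcases eq_or_lt_of_le (norm_nonneg (B w - B z)) with h | h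
    · rw [← h]; positivity
    · have h1 := hco w z
      have h2 := real_inner_le_norm (B w - B z) (w - z)
      have h3 : β * ‖B w - B z‖ ≤ ‖w - z‖ := by nlinarith
      have h4 : 1 < γ * β := (div_lt_iff₀ hβ).mp hβγ
      nlinarith [mul_le_mul_of_nonneg_left h3 hγ.le]
  have hlipAl := hlip Al αl hαl hαlγ hAl_coco
  have hlipA := hlip A α hα hαγ hA_coco
  have hcont : ∀ (B : H → H), (∀ w z : H, ‖B w - B z‖ ≤ γ * ‖w - z‖) → Continuous B := by
    intro B hB
    have : LipschitzWith (Real.toNNReal γ) B := by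
      apply LipschitzWith.of_dist_le_mul
      intro w z
      rw [dist_eq_norm, dist_eq_norm]
      simpa [Real.coe_toNNReal γ hγ.le] using hB w z
    exact this.continuous
  have hAlcont : Continuous Al := hcont Al hlipAl
  have hAcont : Continuous A := hcont A hlipA
  have hBnorm : ∀ s, ‖Al (xl s) - A (x s)‖ ≤ c + γ * p s := by
    intro s
    calc ‖Al (xl s) - A (x s)‖
        = ‖(Al (xl s) - Al (x s)) + (Al (x s) - A (x s))‖ := by abel_nf
      _ ≤ ‖Al (xl s) - Al (x s)‖ + ‖Al (x s) - A (x s)‖ := norm_add_le _ _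
      _ ≤ γ * ‖xl s - x s‖ + c := add_le_add (hlipAl _ _) (hparam (x s))
      _ = c + γ * p s := by rw [hpdef]; ring
  -- first order bound on the difference of derivatives
  have hq : ∀ t ∈ Set.Icc (0:ℝ) T, ‖xl' t - x' t‖ ≤ b + ∫ s in (0:ℝ)..t, (c + γ * p s) := by
    intro t ht
    have htsub : Set.Icc (0:ℝ) t ⊆ Set.Icc 0 T := Set.Icc_subset_Icc le_rfl ht.2
    have huIcc : Set.uIcc (0:ℝ) t = Set.Icc 0 t := Set.uIcc_of_le ht.1
    have hgd : ∀ s ∈ Set.uIcc (0:ℝ) t,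
        HasDerivAt (fun s => Real.exp (γ * s) • (xl' s - x' s))
          (-(Real.exp (γ * s) • (Al (xl s) - A (x s)))) s := by
      intro s hs
      have hs' : s ∈ Set.Icc (0:ℝ) T := htsub (huIcc ▸ hs)
      have hce : HasDerivAt (fun s : ℝ => Real.exp (γ * s)) (Real.exp (γ * s) * γ) s := by
        have h1 : HasDerivAt (fun s : ℝ => γ * s) γ s := by
          simpa using (hasDerivAt_id' (x := s)).const_mul γ
        exact h1.exp
      have hyd := (hxl' s hs').sub (hx' s hs')
      have h2 := hce.smul hyd
      exact h2.congr_deriv (by rw [Pi.sub_apply]; module)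
    have hcontB : ContinuousOn (fun s => -(Real.exp (γ * s) • (Al (xl s) - A (x s))))
        (Set.uIcc (0:ℝ) t) := by
      rw [huIcc]
      exact (((Real.continuous_exp.comp (continuous_const.mul continuous_id)).continuousOn).smul
        ((hAlcont.comp_continuousOn (hxlC.mono htsub)).sub
          (hAcont.comp_continuousOn (hxC.mono htsub)))).neg
    have hint : IntervalIntegrable (fun s => -(Real.exp (γ * s) • (Al (xl s) - A (x s))))
        MeasureTheory.volume 0 t := hcontB.intervalIntegrable
    have hFTC := intervalIntegral.integral_eq_sub_of_hasDerivAt hgd hint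
    have h0v : Real.exp (γ * 0) • (xl' 0 - x' 0) = v₀l - v₀ := by
      rw [hxl'0, hx'0]; simp
    have h1 : Real.exp (γ * t) • (xl' t - x' t)
        = (v₀l - v₀) + ∫ s in (0:ℝ)..t, -(Real.exp (γ * s) • (Al (xl s) - A (x s))) := by
      rw [hFTC, h0v]; abel
    have hIC : ContinuousOn (fun s => Real.exp (γ * t) * (c + γ * p s)) (Set.Icc (0:ℝ) t) :=
      continuousOn_const.mul (continuousOn_const.add (continuousOn_const.mul (hpC.mono htsub)))
    have h2 : ‖∫ s in (0:ℝ)..t, -(Real.exp (γ * s) • (Al (xl s) - A (x s)))‖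
        ≤ ∫ s in (0:ℝ)..t, Real.exp (γ * t) * (c + γ * p s) := by
      refine (intervalIntegral.norm_integral_le_integral_norm ht.1).trans ?_
      apply intervalIntegral.integral_mono_on ht.1 hint.norm
        (hIC.intervalIntegrable_of_Icc ht.1)
      intro s hs
      have hse : Real.exp (γ * s) ≤ Real.exp (γ * t) :=
        Real.exp_le_exp.mpr (mul_le_mul_of_nonneg_left hs.2 hγ.le)
      have hBn := hBnorm s
      have hBpos : (0:ℝ) ≤ c + γ * p s := le_trans (norm_nonneg _) hBn
      calc ‖-(Real.exp (γ * s) • (Al (xl s) - A (x s)))‖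
          = Real.exp (γ * s) * ‖Al (xl s) - A (x s)‖ := by
            rw [norm_neg, norm_smul, Real.norm_eq_abs, abs_of_pos (Real.exp_pos _)]
        _ ≤ Real.exp (γ * t) * (c + γ * p s) := by
            apply mul_le_mul hse hBn (norm_nonneg _) (Real.exp_pos _).le
    have h3 : Real.exp (γ * t) * ‖xl' t - x' t‖
        ≤ b + Real.exp (γ * t) * ∫ s in (0:ℝ)..t, (c + γ * p s) := by
      have hnorm : ‖Real.exp (γ * t) • (xl' t - x' t)‖
          = Real.exp (γ * t) * ‖xl' t - x' t‖ := by
        rw [norm_smul, Real.norm_eq_abs, abs_of_pos (Real.exp_pos _)]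
      have := (norm_add_le (v₀l - v₀)
        (∫ s in (0:ℝ)..t, -(Real.exp (γ * s) • (Al (xl s) - A (x s)))))
      rw [← h1, hnorm] at this
      have hpull : (∫ s in (0:ℝ)..t, Real.exp (γ * t) * (c + γ * p s))
          = Real.exp (γ * t) * ∫ s in (0:ℝ)..t, (c + γ * p s) :=
        intervalIntegral.integral_const_mul _ _
      rw [hpull] at h2
      exact this.trans (by linarith)
    have hexp1 : (1:ℝ) ≤ Real.exp (γ * t) :=
      Real.one_le_exp (mul_nonneg hγ.le ht.1)
    have hfin : Real.exp (γ * t) * ‖xl' t - x' t‖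
        ≤ Real.exp (γ * t) * (b + ∫ s in (0:ℝ)..t, (c + γ * p s)) := by
      nlinarith [h3, hexp1, hb0]
    exact le_of_mul_le_mul_left hfin (Real.exp_pos _)
  -- zeroth order bound
  have hp1 : ∀ t ∈ Set.Icc (0:ℝ) T, p t ≤ a + ∫ s in (0:ℝ)..t, ‖xl' s - x' s‖ := by
    intro t ht
    have htsub : Set.Icc (0:ℝ) t ⊆ Set.Icc 0 T := Set.Icc_subset_Icc le_rfl ht.2
    have huIcc : Set.uIcc (0:ℝ) t = Set.Icc 0 t := Set.uIcc_of_le ht.1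
    have hgd : ∀ s ∈ Set.uIcc (0:ℝ) t, HasDerivAt (fun s => xl s - x s) (xl' s - x' s) s := by
      intro s hs
      have hs' : s ∈ Set.Icc (0:ℝ) T := htsub (huIcc ▸ hs)
      exact (hxl s hs').sub (hx s hs')
    have hint : IntervalIntegrable (fun s => xl' s - x' s) MeasureTheory.volume 0 t := by
      apply ContinuousOn.intervalIntegrable
      rw [huIcc]
      exact (hxl'C.mono htsub).sub (hx'C.mono htsub)
    have hFTC := intervalIntegral.integral_eq_sub_of_hasDerivAt hgd hint
    have h1 : xl t - x t = (u₀l - u₀) + ∫ s in (0:ℝ)..t, (xl' s - x' s) := by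
      rw [hFTC, hxl0, hx0]; abel
    calc p t = ‖(u₀l - u₀) + ∫ s in (0:ℝ)..t, (xl' s - x' s)‖ := by
          rw [hpdef]; show ‖xl t - x t‖ = _; rw [h1]
      _ ≤ a + ‖∫ s in (0:ℝ)..t, (xl' s - x' s)‖ := by rw [hadef]; exact norm_add_le _ _
      _ ≤ a + ∫ s in (0:ℝ)..t, ‖xl' s - x' s‖ :=
          add_le_add_right (intervalIntegral.norm_integral_le_integral_norm ht.1) a
  -- continuity of the inner primitive
  have hIcc : Set.uIcc (0:ℝ) T = Set.Icc 0 T := Set.uIcc_of_le hT.le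
  have hinnerC : ContinuousOn (fun s => ∫ r in (0:ℝ)..s, (c + γ * p r)) (Set.Icc (0:ℝ) T) := by
    have hintOn : IntegrableOn (fun r => c + γ * p r) (Set.uIcc (0:ℝ) T) MeasureTheory.volume := by
      rw [hIcc]
      exact (continuousOn_const.add (continuousOn_const.mul hpC)).integrableOn_compact
        isCompact_Icc
    have := continuousOn_primitive_interval hintOn
    rwa [hIcc] at this
  -- nested integral inequality for p
  have hpq : ∀ t ∈ Set.Icc (0:ℝ) T,
      p t ≤ a + ∫ s in (0:ℝ)..t, (b + ∫ r in (0:ℝ)..s, (c + γ * p r)) := by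
    intro t ht
    have htsub : Set.Icc (0:ℝ) t ⊆ Set.Icc 0 T := Set.Icc_subset_Icc le_rfl ht.2
    refine (hp1 t ht).trans ?_
    have hmono : (∫ s in (0:ℝ)..t, ‖xl' s - x' s‖)
        ≤ ∫ s in (0:ℝ)..t, (b + ∫ r in (0:ℝ)..s, (c + γ * p r)) := by
      apply intervalIntegral.integral_mono_on ht.1
      · apply ContinuousOn.intervalIntegrable
        rw [Set.uIcc_of_le ht.1]
        exact ((hxl'C.mono htsub).sub (hx'C.mono htsub)).norm
      · apply ContinuousOn.intervalIntegrable
        rw [Set.uIcc_of_le ht.1]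
        exact continuousOn_const.add (hinnerC.mono htsub)
      · intro s hs
        exact hq s (htsub hs)
    linarith
  -- the comparison function Ψ
  set Ψ : ℝ → ℝ := fun s =>
    a * Real.cosh (μ * s) + (b / μ) * Real.sinh (μ * s) + (c / γ) * (Real.cosh (μ * s) - 1)
    with hΨdef
  set Ψ' : ℝ → ℝ := fun s =>
    a * μ * Real.sinh (μ * s) + b * Real.cosh (μ * s) + (c / μ) * Real.sinh (μ * s)
    with hΨ'def
  clear_value Ψ Ψ'
  have hlin : ∀ s : ℝ, HasDerivAt (fun r : ℝ => μ * r) μ s := by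
    intro s
    simpa using (hasDerivAt_id' (x := s)).const_mul μ
  have hΨd : ∀ s, HasDerivAt Ψ (Ψ' s) s := by
    intro s
    have h1 := ((((hlin s).cosh.const_mul a).add
      (((hlin s).sinh).const_mul (b / μ))).add
      ((((hlin s).cosh).sub_const 1).const_mul (c / γ)))
    rw [hΨdef]; refine h1.congr_deriv ?_
    rw [hΨ'def, ← hμ2]
    field_simp
  have hΨ'd : ∀ s, HasDerivAt Ψ' (c + γ * Ψ s) s := by
    intro s
    have h1 := ((((hlin s).sinh.const_mul (a * μ)).add
      (((hlin s).cosh).const_mul b)).add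
      (((hlin s).sinh).const_mul (c / μ)))
    rw [hΨ'def]; refine h1.congr_deriv ?_
    rw [hΨdef, ← hμ2]
    field_simp
    ring
  have hΨC : Continuous Ψ := by
    rw [hΨdef]; fun_prop
  have hΨ'C : Continuous Ψ' := by
    rw [hΨ'def]; fun_prop
  have hΨeq : ∀ t : ℝ, Ψ t = a + ∫ s in (0:ℝ)..t, (b + ∫ r in (0:ℝ)..s, (c + γ * Ψ r)) := by
    intro t
    have hinner : ∀ s : ℝ, (∫ r in (0:ℝ)..s, (c + γ * Ψ r)) = Ψ' s - b := by
      intro s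
      rw [intervalIntegral.integral_eq_sub_of_hasDerivAt (fun r _ => hΨ'd r)
        ((continuous_const.add (continuous_const.mul hΨC)).intervalIntegrable _ _)]
      have : Ψ' 0 = b := by rw [hΨ'def]; simp
      rw [this]
    have houter : (∫ s in (0:ℝ)..t, (b + ∫ r in (0:ℝ)..s, (c + γ * Ψ r)))
        = ∫ s in (0:ℝ)..t, Ψ' s := by
      apply intervalIntegral.integral_congr
      intro s _
      show b + (∫ r in (0:ℝ)..s, (c + γ * Ψ r)) = Ψ' s
      rw [hinner s]; ring
    rw [houter, intervalIntegral.integral_eq_sub_of_hasDerivAt (fun s _ => hΨd s)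
      (hΨ'C.intervalIntegrable _ _)]
    have : Ψ 0 = a := by rw [hΨdef]; simp
    rw [this]; ring
  -- difference function
  set D : ℝ → ℝ := fun s => p s - Ψ s with hDdef
  have hDC : ContinuousOn D (Set.Icc 0 T) := by
    rw [hDdef]; exact hpC.sub hΨC.continuousOn
  have hDints : ∀ s ∈ Set.Icc (0:ℝ) T, IntervalIntegrable D MeasureTheory.volume 0 s := by
    intro s hs
    apply ContinuousOn.intervalIntegrable
    rw [Set.uIcc_of_le hs.1]
    exact hDC.mono (Set.Icc_subset_Icc le_rfl hs.2)
  have hIDC : ContinuousOn (fun s => ∫ r in (0:ℝ)..s, D r) (Set.Icc (0:ℝ) T) := by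
    have hintOn : IntegrableOn D (Set.uIcc (0:ℝ) T) MeasureTheory.volume := by
      rw [hIcc]; exact hDC.integrableOn_compact isCompact_Icc
    have := continuousOn_primitive_interval hintOn
    rwa [hIcc] at this
  have hpint : ∀ s ∈ Set.Icc (0:ℝ) T,
      IntervalIntegrable (fun r => c + γ * p r) MeasureTheory.volume 0 s := by
    intro s hs
    apply ContinuousOn.intervalIntegrable
    rw [Set.uIcc_of_le hs.1]
    exact (continuousOn_const.add (continuousOn_const.mul hpC)).mono
      (Set.Icc_subset_Icc le_rfl hs.2)
  have hr : ∀ t ∈ Set.Icc (0:ℝ) T,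
      D t ≤ γ * ∫ s in (0:ℝ)..t, ∫ r in (0:ℝ)..s, D r := by
    intro t ht
    have htsub : Set.Icc (0:ℝ) t ⊆ Set.Icc 0 T := Set.Icc_subset_Icc le_rfl ht.2
    have e1 : ∀ s ∈ Set.Icc (0:ℝ) T,
        (∫ r in (0:ℝ)..s, (c + γ * p r)) - (∫ r in (0:ℝ)..s, (c + γ * Ψ r))
          = γ * ∫ r in (0:ℝ)..s, D r := by
      intro s hs
      rw [← intervalIntegral.integral_sub (hpint s hs)
        (show IntervalIntegrable (fun r => c + γ * Ψ r) MeasureTheory.volume 0 s from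
          (continuous_const.add (continuous_const.mul hΨC)).intervalIntegrable _ _)]
      rw [← intervalIntegral.integral_const_mul]
      apply intervalIntegral.integral_congr
      intro r _
      show (c + γ * p r) - (c + γ * Ψ r) = γ * D r
      rw [hDdef]; ring
    have e2 : (∫ s in (0:ℝ)..t, (b + ∫ r in (0:ℝ)..s, (c + γ * p r)))
        - (∫ s in (0:ℝ)..t, (b + ∫ r in (0:ℝ)..s, (c + γ * Ψ r)))
          = ∫ s in (0:ℝ)..t, γ * ∫ r in (0:ℝ)..s, D r := by
      rw [← intervalIntegral.integral_sub]
      · apply intervalIntegral.integral_congr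
        intro s hs
        have hs' : s ∈ Set.Icc (0:ℝ) T := htsub (by rwa [Set.uIcc_of_le ht.1] at hs)
        show (b + ∫ r in (0:ℝ)..s, (c + γ * p r)) - (b + ∫ r in (0:ℝ)..s, (c + γ * Ψ r))
          = γ * ∫ r in (0:ℝ)..s, D r
        rw [← e1 s hs']; ring
      · apply ContinuousOn.intervalIntegrable
        rw [Set.uIcc_of_le ht.1]
        exact continuousOn_const.add (hinnerC.mono htsub)
      · apply ContinuousOn.intervalIntegrable
        rw [Set.uIcc_of_le ht.1]
        intro s hs
        have : ContinuousOn (fun s => b + ∫ r in (0:ℝ)..s, (c + γ * Ψ r)) (Set.Icc 0 t) := by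
          apply continuousOn_const.add
          apply ContinuousOn.mono _ htsub
          have hintOn : IntegrableOn (fun r => c + γ * Ψ r) (Set.uIcc (0:ℝ) T)
              MeasureTheory.volume :=
            ((continuous_const.add (continuous_const.mul hΨC)).continuousOn).integrableOn_compact
              (hIcc ▸ isCompact_Icc)
          have := continuousOn_primitive_interval hintOn
          rwa [hIcc] at this
        exact this s hs
    have e3 : (∫ s in (0:ℝ)..t, γ * ∫ r in (0:ℝ)..s, D r)
        = γ * ∫ s in (0:ℝ)..t, ∫ r in (0:ℝ)..s, D r := intervalIntegral.integral_const_mul _ _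
    have h4 := hpq t ht
    have h5 := hΨeq t
    rw [hDdef]
    dsimp only
    linarith [e2, e3, h4, h5]
  -- upper bound for D on the compact interval
  obtain ⟨M, hM⟩ : ∃ M, ∀ s ∈ Set.Icc (0:ℝ) T, D s ≤ M := by
    obtain ⟨M, hM⟩ := (isCompact_Icc.bddAbove_image hDC)
    exact ⟨M, fun s hs => hM (Set.mem_image_of_mem D hs)⟩
  -- Volterra iteration
  have hiter : ∀ n : ℕ, ∀ t ∈ Set.Icc (0:ℝ) T,
      D t ≤ M * γ ^ n * t ^ (2 * n) / (Nat.factorial (2 * n)) := by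
    intro n
    induction n with
    | zero => intro t ht; simpa using hM t ht
    | succ n ih =>
      intro t ht
      have htsub : Set.Icc (0:ℝ) t ⊆ Set.Icc 0 T := Set.Icc_subset_Icc le_rfl ht.2
      have hfact : (0:ℝ) < (Nat.factorial (2 * n) : ℝ) :=
        Nat.cast_pos.mpr (Nat.factorial_pos _)
      have hDle : ∀ s ∈ Set.Icc (0:ℝ) T,
          (∫ r in (0:ℝ)..s, D r)
            ≤ M * γ ^ n / (Nat.factorial (2 * n)) * (s ^ (2 * n + 1) / (2 * n + 1)) := by
        intro s hs
        have h1 : (∫ r in (0:ℝ)..s, D r)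
            ≤ ∫ r in (0:ℝ)..s, (M * γ ^ n / (Nat.factorial (2 * n))) * r ^ (2 * n) := by
          apply intervalIntegral.integral_mono_on hs.1 (hDints s hs)
            ((continuous_const.mul (continuous_pow _)).intervalIntegrable _ _)
          intro r hr
          have := ih r ⟨hr.1, hr.2.trans hs.2⟩
          calc D r ≤ M * γ ^ n * r ^ (2 * n) / (Nat.factorial (2 * n)) := this
            _ = (M * γ ^ n / (Nat.factorial (2 * n))) * r ^ (2 * n) := by ring
        have h2 : (∫ r in (0:ℝ)..s, (M * γ ^ n / (Nat.factorial (2 * n))) * r ^ (2 * n))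
            = M * γ ^ n / (Nat.factorial (2 * n)) * (s ^ (2 * n + 1) / (2 * n + 1)) := by
          rw [intervalIntegral.integral_const_mul, integral_pow]
          push_cast
          ring
        linarith
      have h3 := hr t ht
      have h4 : (∫ s in (0:ℝ)..t, ∫ r in (0:ℝ)..s, D r)
          ≤ ∫ s in (0:ℝ)..t,
              (M * γ ^ n / (Nat.factorial (2 * n)) / (2 * n + 1)) * s ^ (2 * n + 1) := by
        apply intervalIntegral.integral_mono_on ht.1
        · apply ContinuousOn.intervalIntegrable
          rw [Set.uIcc_of_le ht.1]
          exact hIDC.mono htsub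
        · exact (continuous_const.mul (continuous_pow _)).intervalIntegrable _ _
        · intro s hs
          have := hDle s (htsub hs)
          calc (∫ r in (0:ℝ)..s, D r)
              ≤ M * γ ^ n / (Nat.factorial (2 * n)) * (s ^ (2 * n + 1) / (2 * n + 1)) := this
            _ = (M * γ ^ n / (Nat.factorial (2 * n)) / (2 * n + 1)) * s ^ (2 * n + 1) := by
                ring
      have h5 : (∫ s in (0:ℝ)..t,
            (M * γ ^ n / (Nat.factorial (2 * n)) / (2 * n + 1)) * s ^ (2 * n + 1))
          = (M * γ ^ n / (Nat.factorial (2 * n)) / (2 * n + 1))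
              * (t ^ (2 * n + 2) / (2 * n + 2)) := by
        rw [intervalIntegral.integral_const_mul, integral_pow]
        push_cast
        ring
      have hfacteq : ((Nat.factorial (2 * (n + 1))) : ℝ)
          = (Nat.factorial (2 * n)) * (2 * n + 1) * (2 * n + 2) := by
        have : 2 * (n + 1) = (2 * n + 1) + 1 := by ring
        rw [this, Nat.factorial_succ, Nat.factorial_succ]
        push_cast
        ring
      have hmul : γ * (∫ s in (0:ℝ)..t, ∫ r in (0:ℝ)..s, D r)
          ≤ γ * ((M * γ ^ n / (Nat.factorial (2 * n)) / (2 * n + 1))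
              * (t ^ (2 * n + 2) / (2 * n + 2))) := by
        apply mul_le_mul_of_nonneg_left _ hγ.le
        rw [← h5]; exact h4
      have heq : γ * ((M * γ ^ n / (Nat.factorial (2 * n)) / (2 * n + 1))
              * (t ^ (2 * n + 2) / (2 * n + 2)))
          = M * γ ^ (n + 1) * t ^ (2 * (n + 1)) / (Nat.factorial (2 * (n + 1))) := by
        rw [hfacteq]
        have h2n : (0:ℝ) < 2 * n + 1 := by positivity
        have h2n2 : (0:ℝ) < 2 * n + 2 := by positivity
        field_simp
        ring
      rw [← heq]
      exact h3.trans hmul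
  -- conclude D ≤ 0, i.e. p ≤ Ψ
  have hpΨ : ∀ t ∈ Set.Icc (0:ℝ) T, p t ≤ Ψ t := by
    intro t ht
    have htend : Filter.Tendsto (fun n : ℕ => M * γ ^ n * t ^ (2 * n) / (Nat.factorial (2 * n)))
        Filter.atTop (nhds 0) := by
      apply squeeze_zero_norm (a := fun n : ℕ => |M| * ((γ * t ^ 2) ^ n / (Nat.factorial n)))
      · intro n
        have hfn : (0:ℝ) < (Nat.factorial n : ℝ) := Nat.cast_pos.mpr (Nat.factorial_pos _)
        have hf2n : (0:ℝ) < (Nat.factorial (2 * n) : ℝ) := Nat.cast_pos.mpr (Nat.factorial_pos _)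
        have hfle : (Nat.factorial n : ℝ) ≤ (Nat.factorial (2 * n) : ℝ) :=
          Nat.cast_le.mpr (Nat.factorial_le (by omega))
        have hgt : (0:ℝ) ≤ γ ^ n * t ^ (2 * n) := by
          apply mul_nonneg (pow_nonneg hγ.le n) (pow_nonneg ht.1 _)
        have hpoweq : γ ^ n * t ^ (2 * n) = (γ * t ^ 2) ^ n := by
          rw [mul_pow, pow_mul]
        rw [Real.norm_eq_abs, abs_div, abs_of_pos hf2n, abs_mul, abs_mul]
        rw [abs_of_nonneg (pow_nonneg hγ.le n), abs_of_nonneg (pow_nonneg ht.1 _)]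
        calc |M| * γ ^ n * t ^ (2 * n) / (Nat.factorial (2 * n))
            = |M| * ((γ ^ n * t ^ (2 * n)) / (Nat.factorial (2 * n))) := by ring
          _ ≤ |M| * ((γ ^ n * t ^ (2 * n)) / (Nat.factorial n)) := by
              apply mul_le_mul_of_nonneg_left _ (abs_nonneg M)
              exact div_le_div_of_nonneg_left hgt hfn hfle
          _ = |M| * ((γ * t ^ 2) ^ n / (Nat.factorial n)) := by rw [hpoweq]
      · have := (FloorSemiring.tendsto_pow_div_factorial_atTop (γ * t ^ 2)).const_mul |M|
        simpa using this
    have hle := ge_of_tendsto htend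
      (Filter.Eventually.of_forall (fun n => hiter n t ht))
    have : D t ≤ 0 := hle
    rw [hDdef] at this
    dsimp only at this
    linarith
  -- final assembly
  intro t ht
  have hΨle := hpΨ t ht
  have hK2 := aux_key2 hγ hT ht.1 ht.2
  have hK3 := aux_key3 hγ hT ht.1 ht.2
  rw [← hμdef] at hK2 hK3
  have hωpos : (0:ℝ) < 1 + γ * T / 2 := by nlinarith
  have heq1 : (2:ℝ) / (2 + γ * T) = 1 / (1 + γ * T / 2) := by
    rw [div_eq_div_iff (by nlinarith) (by nlinarith)]; ring
  have heq2 : (2 + γ * T) * t / 2 = (1 + γ * T / 2) * t := by ring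
  rw [heq1, heq2]
  have t1 : a * Real.cosh (μ * t)
      ≤ a * (1 + γ * ((Real.exp ((1 + γ * T / 2) * t) - 1 - t) / (1 + γ * T / 2) ^ 2)) := by
    apply mul_le_mul_of_nonneg_left _ ha0
    have h := mul_le_mul_of_nonneg_left hK3 hγ.le
    have hγne : γ ≠ 0 := hγ.ne'
    have : Real.cosh (μ * t) = 1 + γ * ((Real.cosh (μ * t) - 1) / γ) := by field_simp; ring
    rw [this]
    linarith
  have t2 : (b / μ) * Real.sinh (μ * t)
      ≤ b * ((Real.exp ((1 + γ * T / 2) * t) - 1) / (1 + γ * T / 2)) := by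
    have he : (b / μ) * Real.sinh (μ * t) = b * (Real.sinh (μ * t) / μ) := by ring
    rw [he]
    exact mul_le_mul_of_nonneg_left hK2 hb0
  have t3 : (c / γ) * (Real.cosh (μ * t) - 1)
      ≤ c * ((Real.exp ((1 + γ * T / 2) * t) - 1 - t) / (1 + γ * T / 2) ^ 2) := by
    have he : (c / γ) * (Real.cosh (μ * t) - 1) = c * ((Real.cosh (μ * t) - 1) / γ) := by ring
    rw [he]
    exact mul_le_mul_of_nonneg_left hK3 hc0
  have hΨval : Ψ t = a * Real.cosh (μ * t) + (b / μ) * Real.sinh (μ * t)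
      + (c / γ) * (Real.cosh (μ * t) - 1) := by rw [hΨdef]
  have hpt : p t = ‖xl t - x t‖ := by rw [hpdef]
  rw [← hpt]
  have hfin : p t ≤ a * (1 + γ * ((Real.exp ((1 + γ * T / 2) * t) - 1 - t) / (1 + γ * T / 2) ^ 2))
      + b * ((Real.exp ((1 + γ * T / 2) * t) - 1) / (1 + γ * T / 2))
      + c * ((Real.exp ((1 + γ * T / 2) * t) - 1 - t) / (1 + γ * T / 2) ^ 2) := by
    rw [hΨval] at hΨle
    linarith
  have hgoal : a * (1 + γ * ((Real.exp ((1 + γ * T / 2) * t) - 1 - t) / (1 + γ * T / 2) ^ 2))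
      + b * ((Real.exp ((1 + γ * T / 2) * t) - 1) / (1 + γ * T / 2))
      + c * ((Real.exp ((1 + γ * T / 2) * t) - 1 - t) / (1 + γ * T / 2) ^ 2)
      = (1 + γ * (1 / (1 + γ * T / 2)) ^ 2 * (Real.exp ((1 + γ * T / 2) * t) - 1 - t)) * a
        + 1 / (1 + γ * T / 2) * (Real.exp ((1 + γ * T / 2) * t) - 1) * b
        + L' * (1 / (1 + γ * T / 2)) ^ 2 * (Real.exp ((1 + γ * T / 2) * t) - 1 - t) * δ := by
    rw [hcdef]
    field_simp
  linarith [hfin, hgoal.ge, hgoal.le]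
end

section
/- (Stability for RLC-type second order ODE.) Let τ > 0, β > 0, L' > 0, δ ≥ 0, and L = max(β, τ). Suppose g, g_λ : [0,1] × ℝ → ℝ are continuous, β-Lipschitz in the second variable, and satisfy |g(t,x) − g_λ(t,x)| ≤ L'·δ for all (t,x). If x solves x'' + τx' = g(t,x) on [0,1] with x(0) = x'(0) = 0, and x_λ solves x_λ'' + τx_λ' = g_λ(t,x_λ) with x_λ(0) = x_{0,λ}, x_λ'(0) = ẋ_{0,λ}, then for all t ∈ [0,1]: |x_λ(t) − x(t)| ≤ (1 + L(2/(2+L))²(e^{(2+L)t/2} − 1 − t))|x_{0,λ}| + (2/(2+L))(e^{(2+L)t/2} − 1)|ẋ_{0,λ}| + L'(2/(2+L))²(e^{(2+L)t/2} − 1 − t)·δ. -/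
set_option maxHeartbeats 4000000 in
theorem rlc_stability {τ β L' δ : ℝ}
    (hτ : 0 < τ) (hβ : 0 < β) (hL' : 0 < L') (hδ : 0 ≤ δ)
    (L : ℝ) (hLdef : L = max β τ)
    (g gl : ℝ → ℝ → ℝ)
    (hg_cont : Continuous fun p : ℝ × ℝ => g p.1 p.2)
    (hgl_cont : Continuous fun p : ℝ × ℝ => gl p.1 p.2)
    (hg_lip : ∀ t x x', |g t x - g t x'| ≤ β * |x - x'|)
    (hgl_lip : ∀ t x x', |gl t x - gl t x'| ≤ β * |x - x'|)
    (hparam : ∀ t x, |g t x - gl t x| ≤ L' * δ)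
    (x₀l xd₀l : ℝ)
    (x x' xl xl' : ℝ → ℝ)
    (hx : ∀ t ∈ Set.Icc (0 : ℝ) 1, HasDerivAt x (x' t) t)
    (hx' : ∀ t ∈ Set.Icc (0 : ℝ) 1, HasDerivAt x' (g t (x t) - τ * x' t) t)
    (hx0 : x 0 = 0) (hx'0 : x' 0 = 0)
    (hxl : ∀ t ∈ Set.Icc (0 : ℝ) 1, HasDerivAt xl (xl' t) t)
    (hxl' : ∀ t ∈ Set.Icc (0 : ℝ) 1, HasDerivAt xl' (gl t (xl t) - τ * xl' t) t)
    (hxl0 : xl 0 = x₀l) (hxl'0 : xl' 0 = xd₀l) :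
    ∀ t ∈ Set.Icc (0 : ℝ) 1,
      |xl t - x t| ≤
        (1 + L * (2 / (2 + L)) ^ 2 * (Real.exp ((2 + L) * t / 2) - 1 - t)) * |x₀l|
        + (2 / (2 + L)) * (Real.exp ((2 + L) * t / 2) - 1) * |xd₀l|
        + L' * (2 / (2 + L)) ^ 2 * (Real.exp ((2 + L) * t / 2) - 1 - t) * δ := by
  have hL : 0 < L := by rw [hLdef]; exact lt_max_of_lt_left hβ
  have hβL : β ≤ L := hLdef ▸ le_max_left _ _
  have hτL : τ ≤ L := hLdef ▸ le_max_right _ _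
  set A : ℝ := |x₀l| with hAdef
  set B : ℝ := |xd₀l| with hBdef
  set C : ℝ := L' * δ with hCdef
  clear_value A B C
  have hA : 0 ≤ A := by rw [hAdef]; exact abs_nonneg _
  have hB : 0 ≤ B := by rw [hBdef]; exact abs_nonneg _
  have hC : 0 ≤ C := by rw [hCdef]; exact mul_nonneg hL'.le hδ
  set c : ℝ := (2 + L) / 2 with hc
  clear_value c
  have hc1 : 1 ≤ c := by rw [hc]; linarith
  have hc0 : 0 < c := by linarith
  have hc2 : (0:ℝ) < c^2 := by positivity
  have hLc : L ≤ c ^ 2 := by rw [hc]; nlinarith [sq_nonneg (L - 2)]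
  have hD : 0 ≤ L*A + C := by nlinarith
  set u : ℝ → ℝ := fun s => |xl s - x s| with hu
  set v : ℝ → ℝ := fun s => |xl' s - x' s| with hv
  clear_value u v
  have hu0 : ∀ s, 0 ≤ u s := by intro s; rw [hu]; exact abs_nonneg _
  have hv0g : ∀ s, 0 ≤ v s := by intro s; rw [hv]; exact abs_nonneg _
  -- continuity facts
  have hcu : ∀ s ∈ Set.Icc (0:ℝ) 1, ContinuousAt u s := by
    intro s hs
    rw [hu]
    exact (((hxl s hs).continuousAt).sub ((hx s hs).continuousAt)).abs
  have hcv : ∀ s ∈ Set.Icc (0:ℝ) 1, ContinuousAt v s := by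
    intro s hs
    rw [hv]
    exact (((hxl' s hs).continuousAt).sub ((hx' s hs).continuousAt)).abs
  have hIntOfCont : ∀ (f : ℝ → ℝ), (∀ s ∈ Set.Icc (0:ℝ) 1, ContinuousAt f s) →
      ∀ t ∈ Set.Icc (0:ℝ) 1, IntervalIntegrable f MeasureTheory.volume 0 t := by
    intro f hf t ht
    apply ContinuousOn.intervalIntegrable
    rw [Set.uIcc_of_le ht.1]
    exact fun s hs => (hf s (Set.Icc_subset_Icc le_rfl ht.2 hs)).continuousWithinAt
  have hcLuC : ∀ s ∈ Set.Icc (0:ℝ) 1, ContinuousAt (fun r => L * u r + C) s := by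
    intro s hs
    have h : ContinuousAt (fun r => L * u r + C) s :=
      ((hcu s hs).const_mul L).add continuousAt_const
    exact h
  -- Step 1 : u t ≤ A + ∫ v
  have key2 : ∀ t ∈ Set.Icc (0:ℝ) 1, u t ≤ A + ∫ s in (0:ℝ)..t, v s := by
    intro t ht
    have hsub : Set.Icc (0:ℝ) t ⊆ Set.Icc 0 1 := Set.Icc_subset_Icc le_rfl ht.2
    have hderiv : ∀ s ∈ Set.uIcc (0:ℝ) t,
        HasDerivAt (fun r => xl r - x r) (xl' s - x' s) s := by
      intro s hs
      rw [Set.uIcc_of_le ht.1] at hs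
      exact (hxl s (hsub hs)).sub (hx s (hsub hs))
    have hint : IntervalIntegrable (fun s => xl' s - x' s) MeasureTheory.volume 0 t := by
      apply hIntOfCont _ _ t ht
      exact fun s hs => ((hxl' s hs).continuousAt).sub ((hx' s hs).continuousAt)
    have hftc := intervalIntegral.integral_eq_sub_of_hasDerivAt hderiv hint
    rw [hxl0, hx0] at hftc
    have h1 : xl t - x t = x₀l + ∫ s in (0:ℝ)..t, (xl' s - x' s) := by
      rw [hftc]; ring
    have h2 : |∫ s in (0:ℝ)..t, (xl' s - x' s)| ≤ ∫ s in (0:ℝ)..t, v s := by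
      simpa [hv] using
        intervalIntegral.abs_integral_le_integral_abs (f := fun s => xl' s - x' s) ht.1
    calc u t = |x₀l + ∫ s in (0:ℝ)..t, (xl' s - x' s)| := by simp only [hu]; rw [h1]
      _ ≤ A + |∫ s in (0:ℝ)..t, (xl' s - x' s)| := by rw [hAdef]; exact abs_add_le _ _
      _ ≤ A + ∫ s in (0:ℝ)..t, v s := by linarith
  -- Step 2 : v t ≤ B + ∫ (L u + C)   (variation of constants, exploiting the damping)
  have key3 : ∀ t ∈ Set.Icc (0:ℝ) 1, v t ≤ B + ∫ s in (0:ℝ)..t, (L * u s + C) := by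
    intro t ht
    have hsub : Set.Icc (0:ℝ) t ⊆ Set.Icc 0 1 := Set.Icc_subset_Icc le_rfl ht.2
    set Gd : ℝ → ℝ := fun s => gl s (xl s) - g s (x s) with hGd
    have hGdcont : ∀ s ∈ Set.Icc (0:ℝ) 1, ContinuousAt Gd s := by
      intro s hs
      have h1 : ContinuousAt (fun r => gl r (xl r)) s :=
        hgl_cont.continuousAt.comp (f := fun r => (r, xl r)) (continuousAt_id.prodMk ((hxl s hs).continuousAt))
      have h2 : ContinuousAt (fun r => g r (x r)) s :=
        hg_cont.continuousAt.comp (f := fun r => (r, x r)) (continuousAt_id.prodMk ((hx s hs).continuousAt))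
      exact h1.sub h2
    have hexpτ : ∀ s : ℝ, HasDerivAt (fun r => Real.exp (τ*r)) (τ * Real.exp (τ*s)) s := by
      intro s
      have h := ((hasDerivAt_id s).const_mul τ).exp
      simp only [id_eq, mul_one] at h
      convert h using 1
      ring
    have hW : ∀ s ∈ Set.uIcc (0:ℝ) t,
        HasDerivAt (fun r => Real.exp (τ*r) * (xl' r - x' r)) (Real.exp (τ*s) * Gd s) s := by
      intro s hs
      rw [Set.uIcc_of_le ht.1] at hs
      have h2 := (hxl' s (hsub hs)).fun_sub (hx' s (hsub hs))
      have h3 := (hexpτ s).fun_mul h2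
      refine h3.congr_deriv ?_
      simp only [hGd]
      ring
    have hWint : IntervalIntegrable (fun s => Real.exp (τ*s) * Gd s) MeasureTheory.volume 0 t := by
      apply hIntOfCont _ _ t ht
      intro s hs
      exact (Real.continuous_exp.comp (continuous_const.mul continuous_id)).continuousAt.mul
        (hGdcont s hs)
    have hftc := intervalIntegral.integral_eq_sub_of_hasDerivAt hW hWint
    rw [hxl'0, hx'0, mul_zero, Real.exp_zero] at hftc
    have h1 : Real.exp (τ*t) * (xl' t - x' t) = xd₀l + ∫ s in (0:ℝ)..t, Real.exp (τ*s) * Gd s := by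
      rw [hftc]; ring
    have hGdle : ∀ s ∈ Set.Icc (0:ℝ) t, |Gd s| ≤ L * u s + C := by
      intro s hs
      have e1 : Gd s = (gl s (xl s) - gl s (x s)) + (gl s (x s) - g s (x s)) := by
        simp only [hGd]; ring
      have e2 : |gl s (xl s) - gl s (x s)| ≤ β * u s := by
        simpa [hu] using hgl_lip s (xl s) (x s)
      have e3 : |gl s (x s) - g s (x s)| ≤ C := by
        rw [abs_sub_comm]; exact hparam s (x s)
      have e4 : β * u s ≤ L * u s := mul_le_mul_of_nonneg_right hβL (hu0 s)
      calc |Gd s| ≤ |gl s (xl s) - gl s (x s)| + |gl s (x s) - g s (x s)| := by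
            rw [e1]; exact abs_add_le _ _
        _ ≤ L * u s + C := by linarith
    have hint1 : IntervalIntegrable (fun s => |Real.exp (τ*s) * Gd s|) MeasureTheory.volume 0 t := by
      apply hIntOfCont _ _ t ht
      intro s hs
      exact ((Real.continuous_exp.comp (continuous_const.mul continuous_id)).continuousAt.mul
        (hGdcont s hs)).abs
    have hint2 : IntervalIntegrable (fun s => Real.exp (τ*t) * (L * u s + C))
        MeasureTheory.volume 0 t := by
      apply hIntOfCont _ _ t ht
      intro s hs
      exact (hcLuC s hs).const_mul _
    have hmono : ∀ s ∈ Set.Icc (0:ℝ) t,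
        |Real.exp (τ*s) * Gd s| ≤ Real.exp (τ*t) * (L * u s + C) := by
      intro s hs
      rw [abs_mul, abs_of_pos (Real.exp_pos _)]
      have h5 : Real.exp (τ*s) ≤ Real.exp (τ*t) :=
        Real.exp_le_exp.2 (mul_le_mul_of_nonneg_left hs.2 hτ.le)
      exact mul_le_mul h5 (hGdle s hs) (abs_nonneg _) (Real.exp_pos _).le
    have h6 : |∫ s in (0:ℝ)..t, Real.exp (τ*s) * Gd s| ≤
        Real.exp (τ*t) * ∫ s in (0:ℝ)..t, (L * u s + C) := by
      calc |∫ s in (0:ℝ)..t, Real.exp (τ*s) * Gd s|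
          ≤ ∫ s in (0:ℝ)..t, |Real.exp (τ*s) * Gd s| :=
            intervalIntegral.abs_integral_le_integral_abs ht.1
        _ ≤ ∫ s in (0:ℝ)..t, Real.exp (τ*t) * (L * u s + C) :=
            intervalIntegral.integral_mono_on ht.1 hint1 hint2 hmono
        _ = Real.exp (τ*t) * ∫ s in (0:ℝ)..t, (L * u s + C) :=
            intervalIntegral.integral_const_mul _ _
    have hIpos : 0 ≤ ∫ s in (0:ℝ)..t, (L * u s + C) := by
      apply intervalIntegral.integral_nonneg ht.1
      intro s hs
      have h8 : 0 ≤ u s := hu0 s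
      nlinarith
    have hE1 : 1 ≤ Real.exp (τ*t) := by
      rw [← Real.exp_zero]
      exact Real.exp_le_exp.2 (mul_nonneg hτ.le ht.1)
    have h7 : Real.exp (τ*t) * v t ≤ B + Real.exp (τ*t) * ∫ s in (0:ℝ)..t, (L * u s + C) := by
      have e5 : Real.exp (τ*t) * v t = |Real.exp (τ*t) * (xl' t - x' t)| := by
        simp only [hv]
        rw [abs_mul, abs_of_pos (Real.exp_pos _)]
      rw [e5, h1]
      calc |xd₀l + ∫ s in (0:ℝ)..t, Real.exp (τ*s) * Gd s|
          ≤ B + |∫ s in (0:ℝ)..t, Real.exp (τ*s) * Gd s| := by rw [hBdef]; exact abs_add_le _ _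
        _ ≤ B + Real.exp (τ*t) * ∫ s in (0:ℝ)..t, (L * u s + C) := by linarith
    have hv0 : 0 ≤ v t := hv0g t
    nlinarith [mul_le_mul_of_nonneg_right hE1 hv0]
  -- supersolution Φ, Ψ
  set Φ : ℝ → ℝ := fun s =>
    A + (L*A + C) * ((Real.exp (c*s) - 1 - s)/c^2) + B * ((Real.exp (c*s) - 1)/c) with hΦ
  set Ψ : ℝ → ℝ := fun s =>
    (L*A + C) * ((c * Real.exp (c*s) - 1)/c^2) + B * Real.exp (c*s) with hΨ
  set Ψd : ℝ → ℝ := fun s =>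
    (L*A + C) * ((c * (c * Real.exp (c*s)))/c^2) + B * (c * Real.exp (c*s)) with hΨd
  clear_value Φ Ψ Ψd
  have hexp : ∀ s : ℝ, HasDerivAt (fun r => Real.exp (c*r)) (c * Real.exp (c*s)) s := by
    intro s
    have h := ((hasDerivAt_id s).const_mul c).exp
    simp only [id_eq, mul_one] at h
    convert h using 1
    ring
  have hΦ' : ∀ s : ℝ, HasDerivAt Φ (Ψ s) s := by
    intro s
    have h1 : HasDerivAt (fun r => Real.exp (c*r) - 1 - r) (c * Real.exp (c*s) - 1) s := by
      exact ((hexp s).sub_const 1).sub (hasDerivAt_id' s)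
    have h2 : HasDerivAt (fun r => Real.exp (c*r) - 1) (c * Real.exp (c*s)) s := by
      simpa using ((hexp s).sub_const 1)
    have key := (((h1.div_const (c^2)).const_mul (L*A+C)).add
      ((h2.div_const c).const_mul B)).const_add A
    have e1 : Φ = fun r =>
        A + ((L*A+C) * ((Real.exp (c*r) - 1 - r)/c^2) + B * ((Real.exp (c*r) - 1)/c)) := by
      funext r; simp only [hΦ]; ring
    have e2 : Ψ s = (L*A+C) * ((c * Real.exp (c*s) - 1)/c^2) + B * (c * Real.exp (c*s)/c) := by
      simp only [hΨ]; field_simp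
    rw [e1, e2]; exact key
  have hΨ' : ∀ s : ℝ, HasDerivAt Ψ (Ψd s) s := by
    intro s
    have h1 : HasDerivAt (fun r => c * Real.exp (c*r) - 1) (c * (c * Real.exp (c*s))) s := by
      simpa using (((hexp s).const_mul c).sub_const 1)
    simp only [hΨ, hΨd]
    exact ((h1.div_const (c^2)).const_mul (L*A+C)).add ((hexp s).const_mul B)
  have hΦcont : Continuous Φ := continuous_iff_continuousAt.2 fun s => (hΦ' s).continuousAt
  have hΨcont : Continuous Ψ := continuous_iff_continuousAt.2 fun s => (hΨ' s).continuousAt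
  have hΨdcont : Continuous Ψd := by
    have h : Continuous fun s : ℝ => Real.exp (c*s) :=
      Real.continuous_exp.comp (continuous_const.mul continuous_id)
    rw [hΨd]
    continuity
  have hΦ0 : Φ 0 = A := by simp [hΦ]
  have hΨ0 : B ≤ Ψ 0 := by
    simp only [hΨ, mul_zero, Real.exp_zero, mul_one]
    have h1 : 0 ≤ (c - 1)/c^2 := div_nonneg (by linarith) (by positivity)
    nlinarith [mul_nonneg hD h1]
  have hpt : ∀ s : ℝ, 0 ≤ s → L * Φ s + C ≤ Ψd s := by
    intro s hs
    have hE1 : 1 + c * s ≤ Real.exp (c*s) := by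
      have := Real.add_one_le_exp (c*s); linarith
    have hE0 : (0:ℝ) < Real.exp (c*s) := Real.exp_pos _
    have eΨd : Ψd s = (L*A+C) * Real.exp (c*s) + B*(c*Real.exp (c*s)) := by
      simp only [hΨd]; field_simp
    simp only [hΦ]
    rw [eΨd]
    set E := Real.exp (c*s) with hE
    clear_value E
    have hE2 : 0 ≤ E - 1 - s := by nlinarith
    have hL1 : L/c^2 ≤ 1 := (div_le_one hc2).2 hLc
    have t1 : L*((L*A+C)*((E-1-s)/c^2)) ≤ (L*A+C)*(E-1-s) :=
      calc L*((L*A+C)*((E-1-s)/c^2)) = (L*A+C)*((E-1-s)*(L/c^2)) := by ring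
        _ ≤ (L*A+C)*((E-1-s)*1) :=
            mul_le_mul_of_nonneg_left (mul_le_mul_of_nonneg_left hL1 hE2) hD
        _ = (L*A+C)*(E-1-s) := by ring
    have t2 : L*(B*((E-1)/c)) ≤ B*(c*E) := by
      have h1 : L*(E-1) ≤ c^2*E := by nlinarith
      calc L*(B*((E-1)/c)) = B*((L*(E-1))/c) := by ring
        _ ≤ B*((c^2*E)/c) := mul_le_mul_of_nonneg_left ((div_le_div_iff_of_pos_right hc0).2 h1) hB
        _ = B*(c*E) := by field_simp
    have t3 : (L*A+C) + (L*A+C)*(E-1-s) ≤ (L*A+C)*E := by nlinarith [mul_nonneg hD hs]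
    nlinarith [t1, t2, t3]
  -- integral supersolution properties
  have hΦsup : ∀ t ∈ Set.Icc (0:ℝ) 1, A + (∫ s in (0:ℝ)..t, Ψ s) = Φ t := by
    intro t ht
    have hftc := intervalIntegral.integral_eq_sub_of_hasDerivAt
      (f := Φ) (f' := Ψ) (fun s _ => hΦ' s) (hΨcont.intervalIntegrable (μ := MeasureTheory.volume) 0 t)
    rw [hftc, hΦ0]; ring
  have hΨsup : ∀ t ∈ Set.Icc (0:ℝ) 1, B + (∫ s in (0:ℝ)..t, (L * Φ s + C)) ≤ Ψ t := by
    intro t ht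
    have hftc := intervalIntegral.integral_eq_sub_of_hasDerivAt
      (f := Ψ) (f' := Ψd) (fun s _ => hΨ' s) (hΨdcont.intervalIntegrable (μ := MeasureTheory.volume) 0 t)
    have hmono : (∫ s in (0:ℝ)..t, (L * Φ s + C)) ≤ ∫ s in (0:ℝ)..t, Ψd s := by
      apply intervalIntegral.integral_mono_on ht.1
      · exact ((continuous_const.mul hΦcont).add continuous_const).intervalIntegrable (μ := MeasureTheory.volume) 0 t
      · exact hΨdcont.intervalIntegrable (μ := MeasureTheory.volume) 0 t
      · exact fun s hs => hpt s hs.1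
    linarith [hΨ0, hftc, hmono]
  -- positive parts
  set p : ℝ → ℝ := fun s => max (u s - Φ s) 0 with hp
  set q : ℝ → ℝ := fun s => max (v s - Ψ s) 0 with hq
  clear_value p q
  have hpc : ∀ s ∈ Set.Icc (0:ℝ) 1, ContinuousAt p s := by
    intro s hs
    rw [hp]
    exact ((hcu s hs).sub hΦcont.continuousAt).max continuousAt_const
  have hqc : ∀ s ∈ Set.Icc (0:ℝ) 1, ContinuousAt q s := by
    intro s hs
    rw [hq]
    exact ((hcv s hs).sub hΨcont.continuousAt).max continuousAt_const
  have hp0 : ∀ s, 0 ≤ p s := by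
    intro s; simp only [hp]; exact le_max_right _ _
  have hq0 : ∀ s, 0 ≤ q s := by
    intro s; simp only [hq]; exact le_max_right _ _
  have hpkey : ∀ t ∈ Set.Icc (0:ℝ) 1, p t ≤ ∫ s in (0:ℝ)..t, q s := by
    intro t ht
    have hvi := hIntOfCont v hcv t ht
    have hΨi := hΨcont.intervalIntegrable (μ := MeasureTheory.volume) 0 t
    have hqi := hIntOfCont q hqc t ht
    have h1 : u t - Φ t ≤ ∫ s in (0:ℝ)..t, (v s - Ψ s) := by
      rw [intervalIntegral.integral_sub hvi hΨi]
      have h2 := key2 t ht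
      have h3 := hΦsup t ht
      linarith
    have h2 : (∫ s in (0:ℝ)..t, (v s - Ψ s)) ≤ ∫ s in (0:ℝ)..t, q s :=
      intervalIntegral.integral_mono_on ht.1 (hvi.sub hΨi) hqi
        (fun s _ => by simp only [hq]; exact le_max_left _ _)
    have h3 : 0 ≤ ∫ s in (0:ℝ)..t, q s :=
      intervalIntegral.integral_nonneg ht.1 (fun s _ => hq0 s)
    simp only [hp]
    exact max_le (by linarith) h3
  have hqkey : ∀ t ∈ Set.Icc (0:ℝ) 1, q t ≤ ∫ s in (0:ℝ)..t, L * p s := by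
    intro t ht
    have hui := hIntOfCont _ hcLuC t ht
    have hΦi : IntervalIntegrable (fun s => L * Φ s + C) MeasureTheory.volume 0 t :=
      ((continuous_const.mul hΦcont).add continuous_const).intervalIntegrable (μ := MeasureTheory.volume) 0 t
    have hpi := hIntOfCont (fun s => L * p s)
      (fun s hs => (hpc s hs).const_mul L) t ht
    have h1 : v t - Ψ t ≤ ∫ s in (0:ℝ)..t, ((L * u s + C) - (L * Φ s + C)) := by
      rw [intervalIntegral.integral_sub hui hΦi]
      have h2 := key3 t ht
      have h3 := hΨsup t ht
      linarith
    have h2 : (∫ s in (0:ℝ)..t, ((L * u s + C) - (L * Φ s + C))) ≤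
        ∫ s in (0:ℝ)..t, L * p s := by
      apply intervalIntegral.integral_mono_on ht.1 (hui.sub hΦi) hpi
      intro s _
      have h4 : u s - Φ s ≤ p s := by simp only [hp]; exact le_max_left _ _
      nlinarith
    have h3 : 0 ≤ ∫ s in (0:ℝ)..t, L * p s :=
      intervalIntegral.integral_nonneg ht.1 (fun s _ => mul_nonneg hL.le (hp0 s))
    simp only [hq]
    exact max_le (by linarith) h3
  -- clamp to make everything globally continuous
  set proj : ℝ → ℝ := fun s => max 0 (min s 1) with hproj
  clear_value proj
  have hprojc : Continuous proj := by
    rw [hproj]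
    exact continuous_const.max (continuous_id.min continuous_const)
  have hprojmem : ∀ s, proj s ∈ Set.Icc (0:ℝ) 1 := by
    intro s
    simp only [hproj]
    exact ⟨le_max_left _ _, max_le (by norm_num) (min_le_right _ _)⟩
  have hprojid : ∀ s ∈ Set.Icc (0:ℝ) 1, proj s = s := by
    intro s hs
    simp only [hproj]
    rw [min_eq_left hs.2, max_eq_right hs.1]
  set N : ℝ → ℝ := fun s => p (proj s) + q (proj s) with hN
  clear_value N
  have hNcont : Continuous N := by
    rw [hN, continuous_iff_continuousAt]
    intro s
    have h1 : ContinuousAt (fun r => p r + q r) (proj s) :=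
      (hpc _ (hprojmem s)).add (hqc _ (hprojmem s))
    exact h1.comp hprojc.continuousAt
  have hN0 : ∀ s, 0 ≤ N s := by
    intro s; simp only [hN]; exact add_nonneg (hp0 _) (hq0 _)
  have hNN : ∀ s ∈ Set.Icc (0:ℝ) 1, p s + q s = N s := by
    intro s hs
    simp only [hN, hprojid s hs]
  set F : ℝ → ℝ := fun r => ∫ s in (0:ℝ)..r, N s with hF
  clear_value F
  have hFd : ∀ r : ℝ, HasDerivAt F (N r) r := by
    intro r
    rw [hF]
    exact (hNcont.integral_hasStrictDerivAt 0 r).hasDerivAt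
  have hFle : ∀ t ∈ Set.Icc (0:ℝ) 1, N t ≤ (1+L) * F t := by
    intro t ht
    have hqi := hIntOfCont q hqc t ht
    have hLpi := hIntOfCont (fun s => L * p s) (fun s hs => (hpc s hs).const_mul L) t ht
    have hNi : IntervalIntegrable (fun s => (1+L) * N s) MeasureTheory.volume 0 t :=
      (continuous_const.mul hNcont).intervalIntegrable (μ := MeasureTheory.volume) 0 t
    have h1 : N t ≤ (∫ s in (0:ℝ)..t, q s) + ∫ s in (0:ℝ)..t, L * p s := by
      rw [← hNN t ht]
      linarith [hpkey t ht, hqkey t ht]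
    have h2 : (∫ s in (0:ℝ)..t, q s) + (∫ s in (0:ℝ)..t, L * p s)
        = ∫ s in (0:ℝ)..t, (q s + L * p s) :=
      (intervalIntegral.integral_add hqi hLpi).symm
    have h3 : (∫ s in (0:ℝ)..t, (q s + L * p s)) ≤ ∫ s in (0:ℝ)..t, (1+L) * N s := by
      apply intervalIntegral.integral_mono_on ht.1 (hqi.add hLpi) hNi
      intro s hs
      have hs1 : s ∈ Set.Icc (0:ℝ) 1 := Set.Icc_subset_Icc le_rfl ht.2 hs
      have h4 := hNN s hs1
      nlinarith [hp0 s, hq0 s]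
    have h4 : (∫ s in (0:ℝ)..t, (1+L) * N s) = (1+L) * F t := by
      simp only [hF]
      exact intervalIntegral.integral_const_mul _ _
    linarith
  -- Grönwall : F ≤ 0 on [0,1]
  set K : ℝ := 1 + L with hK
  clear_value K
  set G2 : ℝ → ℝ := fun r => Real.exp (-K*r) * F r with hG2
  clear_value G2
  have hexpK : ∀ r : ℝ, HasDerivAt (fun s => Real.exp (-K*s)) (Real.exp (-K*r) * -K) r := by
    intro r
    have h := ((hasDerivAt_id r).const_mul (-K)).exp
    simpa [id_eq, mul_one] using h
  have hG2d : ∀ r : ℝ, HasDerivAt G2 (Real.exp (-K*r) * (N r - K * F r)) r := by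
    intro r
    rw [hG2]
    have h := (hexpK r).fun_mul (hFd r)
    refine h.congr_deriv ?_
    ring
  have hanti : AntitoneOn G2 (Set.Icc (0:ℝ) 1) := by
    apply antitoneOn_of_deriv_nonpos (convex_Icc 0 1)
    · exact (continuous_iff_continuousAt.2 fun r => (hG2d r).continuousAt).continuousOn
    · intro r _
      exact (hG2d r).differentiableAt.differentiableWithinAt
    · intro r hr
      rw [interior_Icc] at hr
      rw [(hG2d r).deriv]
      have h1 := hFle r ⟨hr.1.le, hr.2.le⟩
      have h2 : N r - K * F r ≤ 0 := by linarith
      exact mul_nonpos_of_nonneg_of_nonpos (Real.exp_pos _).le h2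
  have hF0 : F 0 = 0 := by simp [hF]
  have hFzero : ∀ t ∈ Set.Icc (0:ℝ) 1, F t ≤ 0 := by
    intro t ht
    have h1 := hanti (Set.left_mem_Icc.2 zero_le_one) ht ht.1
    have h2 : G2 0 = 0 := by simp [hG2, hF0]
    have h3 : (0:ℝ) < Real.exp (-K*t) := Real.exp_pos _
    simp only [hG2] at h1 h2
    nlinarith
  -- conclude u ≤ Φ on [0,1]
  have hfinal : ∀ t ∈ Set.Icc (0:ℝ) 1, u t ≤ Φ t := by
    intro t ht
    have h1 := hFle t ht
    have h2 := hFzero t ht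
    have h3 : N t ≤ 0 := by nlinarith
    have h4 := hNN t ht
    have h5 : p t = 0 := by linarith [hp0 t, hq0 t]
    have h6 : u t - Φ t ≤ p t := by simp only [hp]; exact le_max_left _ _
    linarith
  -- final algebraic identification
  intro t ht
  have h := hfinal t ht
  have harg : (2+L)*t/2 = c*t := by rw [hc]; ring
  have h2L : (2:ℝ)+L ≠ 0 := by linarith
  calc |xl t - x t| = u t := by rw [hu]
    _ ≤ Φ t := h
    _ = (1 + L * (2 / (2 + L)) ^ 2 * (Real.exp ((2 + L) * t / 2) - 1 - t)) * A
        + (2 / (2 + L)) * (Real.exp ((2 + L) * t / 2) - 1) * B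
        + L' * (2 / (2 + L)) ^ 2 * (Real.exp ((2 + L) * t / 2) - 1 - t) * δ := by
      rw [harg]
      simp only [hΦ, hc, hCdef]
      field_simp
      ring
end

section
/- (Green's function reformulation of the RLC equation.) Let τ > 0 and G(t,s) = (1/τ)(1 − e^{τ(s−t)}) for 0 ≤ s ≤ t ≤ 1 and G(t,s) = 0 for 0 ≤ t < s ≤ 1. If g : [0,1] × ℝ → ℝ is continuous and x : [0,1] → ℝ is C², then x satisfies x''(t) + τx'(t) = g(t, x(t)) for all t ∈ [0,1] with x(0) = x'(0) = 0 if and only if x(t) = ∫₀¹ G(t,s)·g(s, x(s)) ds for all t ∈ [0,1]. -/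
open Set intervalIntegral

theorem greens_function_reformulation {τ : ℝ} (hτ : 0 < τ)
    (G : ℝ → ℝ → ℝ)
    (hG : ∀ t s : ℝ, G t s = if s ≤ t then (1 / τ) * (1 - Real.exp (τ * (s - t))) else 0)
    (g : ℝ → ℝ → ℝ) (hg : Continuous fun p : ℝ × ℝ => g p.1 p.2)
    (x : ℝ → ℝ) (hx : ContDiff ℝ 2 x) :
    ((∀ t ∈ Set.Icc (0 : ℝ) 1, deriv (deriv x) t + τ * deriv x t = g t (x t)) ∧
      x 0 = 0 ∧ deriv x 0 = 0) ↔
    (∀ t ∈ Set.Icc (0 : ℝ) 1, x t = ∫ s in (0 : ℝ)..1, G t s * g s (x s)) := by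
  have hτ' : τ ≠ 0 := ne_of_gt hτ
  set f : ℝ → ℝ := fun s => g s (x s) with hf_def
  have hf : Continuous f := hg.comp (continuous_id.prodMk hx.continuous)
  have hef : Continuous fun s => Real.exp (τ * s) * f s :=
    (Real.continuous_exp.comp (continuous_const.mul continuous_id)).mul hf
  set B : ℝ → ℝ := fun u => ∫ s in (0:ℝ)..u, Real.exp (τ * s) * f s with hB_def
  set A : ℝ → ℝ := fun u => ∫ s in (0:ℝ)..u, f s with hA_def
  have hA : ∀ t, HasDerivAt A (f t) t := fun t =>
    intervalIntegral.integral_hasDerivAt_right (hf.intervalIntegrable 0 t)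
      (hf.stronglyMeasurableAtFilter _ _) hf.continuousAt
  have hB : ∀ t, HasDerivAt B (Real.exp (τ * t) * f t) t := fun t =>
    intervalIntegral.integral_hasDerivAt_right (hef.intervalIntegrable 0 t)
      (hef.stronglyMeasurableAtFilter _ _) hef.continuousAt
  set y : ℝ → ℝ := fun u => (1/τ) * (A u - Real.exp (-(τ * u)) * B u) with hy_def
  set yd : ℝ → ℝ := fun u => Real.exp (-(τ * u)) * B u with hyd_def
  have hexp : ∀ t : ℝ, Real.exp (-(τ * t)) * Real.exp (τ * t) = 1 := by
    intro t; rw [← Real.exp_add]; simp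
  have he : ∀ t, HasDerivAt (fun u => Real.exp (-(τ * u))) (Real.exp (-(τ * t)) * (-τ)) t := by
    intro t
    have : HasDerivAt (fun u : ℝ => -(τ * u)) (-τ) t := by
      simpa using ((hasDerivAt_id t).const_mul τ).fun_neg
    exact this.exp
  have hkey : ∀ t, Real.exp (-(τ * t)) * (Real.exp (τ * t) * f t) = f t := by
    intro t; rw [← mul_assoc, hexp t, one_mul]
  have hyd' : ∀ t, HasDerivAt yd (f t - τ * yd t) t := by
    intro t
    have h : HasDerivAt (fun u => Real.exp (-(τ * u)) * B u) _ t := (he t).fun_mul (hB t)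
    convert h using 1
    rw [hkey t]
    simp only [hyd_def]
    ring
  have hy' : ∀ t, HasDerivAt y (yd t) t := by
    intro t
    have h : HasDerivAt (fun u => (1/τ) * (A u - Real.exp (-(τ * u)) * B u)) _ t :=
      ((hA t).sub ((he t).fun_mul (hB t))).const_mul (1/τ)
    convert h using 1
    rw [hkey t]
    simp only [hyd_def]
    field_simp
    ring
  have hydc : Continuous yd := by
    have : Differentiable ℝ yd := fun t => (hyd' t).differentiableAt
    exact this.continuous
  have hy0 : y 0 = 0 := by simp [hy_def, hA_def, hB_def]
  have hyd0 : yd 0 = 0 := by simp [hyd_def, hB_def]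
  -- x differentiability facts
  have hxd : Differentiable ℝ x := hx.differentiable (by norm_num)
  have hx2 : ContDiff ℝ (1+1) x := by norm_num at hx ⊢; exact hx
  have hxd1 : ContDiff ℝ 1 (deriv x) := (contDiff_succ_iff_deriv.mp hx2).2.2
  have hxdd : Differentiable ℝ (deriv x) := hxd1.differentiable one_ne_zero
  -- the integral equals y t for t ∈ [0,1]
  have hint : ∀ t ∈ Set.Icc (0:ℝ) 1, (∫ s in (0:ℝ)..1, G t s * f s) = y t := by
    intro t ht
    obtain ⟨ht0, ht1⟩ := ht
    set K : ℝ → ℝ := fun s => (1/τ) * max 0 (1 - Real.exp (τ * (s - t))) * f s with hK_def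
    have hGK : ∀ s, G t s * f s = K s := by
      intro s
      simp only [hK_def, hG]
      rcases le_or_gt s t with h | h
      · rw [if_pos h]
        have : Real.exp (τ * (s - t)) ≤ 1 := by
          rw [Real.exp_le_one_iff]
          nlinarith
        rw [max_eq_right (by linarith)]
      · rw [if_neg (not_le.mpr h)]
        have : 1 < Real.exp (τ * (s - t)) := by
          rw [show (1:ℝ) = Real.exp 0 by simp]
          exact Real.exp_lt_exp.mpr (by nlinarith)
        rw [max_eq_left (by linarith)]
        ring
    have hKc : Continuous K :=
      ((continuous_const.mul (continuous_const.max (continuous_const.sub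
        (Real.continuous_exp.comp (continuous_const.mul (continuous_id.sub continuous_const))))))).mul hf
    have h1 : (∫ s in (0:ℝ)..1, G t s * f s) = ∫ s in (0:ℝ)..1, K s :=
      intervalIntegral.integral_congr fun s _ => hGK s
    have hsplit : (∫ s in (0:ℝ)..t, K s) + (∫ s in t..1, K s) = ∫ s in (0:ℝ)..1, K s :=
      intervalIntegral.integral_add_adjacent_intervals (hKc.intervalIntegrable 0 t)
        (hKc.intervalIntegrable t 1)
    have h2 : (∫ s in t..1, K s) = 0 := by
      rw [intervalIntegral.integral_congr (g := fun _ => (0:ℝ)) ?_, intervalIntegral.integral_zero]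
      intro s hs
      rw [Set.uIcc_of_le ht1] at hs
      have : (1:ℝ) ≤ Real.exp (τ * (s - t)) := by
        rw [show (1:ℝ) = Real.exp 0 by simp]
        exact Real.exp_le_exp.mpr (by nlinarith [hs.1])
      simp [hK_def, max_eq_left (by linarith : 1 - Real.exp (τ * (s - t)) ≤ 0)]
    have h3 : (∫ s in (0:ℝ)..t, K s) = y t := by
      have hcg : Set.EqOn K (fun s => (1/τ) * f s - Real.exp (-(τ*t)) * ((1/τ) * (Real.exp (τ*s) * f s)))
          (Set.uIcc 0 t) := by
        intro s hs
        rw [Set.uIcc_of_le ht0] at hs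
        have hst : s ≤ t := hs.2
        have : Real.exp (τ * (s - t)) ≤ 1 := by
          rw [Real.exp_le_one_iff]; nlinarith
        have hmax : max 0 (1 - Real.exp (τ * (s - t))) = 1 - Real.exp (τ * (s - t)) :=
          max_eq_right (by linarith)
        have hee : Real.exp (τ * (s - t)) = Real.exp (-(τ*t)) * Real.exp (τ*s) := by
          rw [← Real.exp_add]; ring_nf
        simp only [hK_def]
        rw [hmax, hee]
        ring
      rw [intervalIntegral.integral_congr hcg, intervalIntegral.integral_sub
        ((continuous_const.fun_mul hf).intervalIntegrable 0 t)
        ((continuous_const.fun_mul (continuous_const.fun_mul hef)).intervalIntegrable 0 t),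
        intervalIntegral.integral_const_mul, intervalIntegral.integral_const_mul,
        intervalIntegral.integral_const_mul]
      simp only [hy_def, hA_def, hB_def]
      ring
    rw [h1, ← hsplit, h2, h3, add_zero]
  constructor
  · rintro ⟨hode, hx0, hx'0⟩ t ht
    rw [hint t ht]
    -- show x = y on [0,1] via uniqueness
    set v : ℝ → ℝ := fun u => Real.exp (τ * u) * (deriv x u - yd u) with hv_def
    have hvc : Continuous v :=
      (Real.continuous_exp.comp (continuous_const.mul continuous_id)).mul
        (hxd1.continuous.sub hydc)
    have hv0 : v 0 = 0 := by simp [hv_def, hx'0, hyd0]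
    have hv' : ∀ u ∈ Set.Ico (0:ℝ) 1, HasDerivWithinAt v 0 (Set.Ici u) u := by
      intro u hu
      have hd : HasDerivAt v (Real.exp (τ*u) * τ * (deriv x u - yd u) +
          Real.exp (τ*u) * (deriv (deriv x) u - (f u - τ * yd u))) u := by
        have h1 : HasDerivAt (fun w => Real.exp (τ * w)) (Real.exp (τ * u) * τ) u := by
          have : HasDerivAt (fun w : ℝ => τ * w) τ u := by
            simpa using (hasDerivAt_id u).const_mul τ
          exact this.exp
        have h2 : HasDerivAt (fun w => deriv x w - yd w) (deriv (deriv x) u - (f u - τ * yd u)) u :=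
          ((hxdd u).hasDerivAt).sub (hyd' u)
        exact h1.mul h2
      have hode' : deriv (deriv x) u = f u - τ * deriv x u := by
        have := hode u ⟨hu.1, le_of_lt hu.2⟩
        simp only [hf_def] at *
        linarith
      have : HasDerivAt v 0 u := by
        convert hd using 1
        rw [hode']
        ring
      exact this.hasDerivWithinAt
    have hveq : ∀ u ∈ Set.Icc (0:ℝ) 1, v u = 0 := by
      intro u hu
      have := constant_of_has_deriv_right_zero hvc.continuousOn hv' u hu
      rw [this, hv0]
    have hxd_eq : ∀ u ∈ Set.Icc (0:ℝ) 1, deriv x u = yd u := by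
      intro u hu
      have h := hveq u hu
      have hexp_ne : Real.exp (τ * u) ≠ 0 := Real.exp_ne_zero _
      simp only [hv_def] at h
      rcases mul_eq_zero.mp h with h' | h'
      · exact absurd h' hexp_ne
      · linarith
    -- now x - y constant
    set w : ℝ → ℝ := fun u => x u - y u with hw_def
    have hyD : Differentiable ℝ y := fun t => (hy' t).differentiableAt
    have hwc : Continuous w := hxd.continuous.sub hyD.continuous
    have hw' : ∀ u ∈ Set.Ico (0:ℝ) 1, HasDerivWithinAt w 0 (Set.Ici u) u := by
      intro u hu
      have hd : HasDerivAt w (deriv x u - yd u) u := ((hxd u).hasDerivAt).sub (hy' u)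
      have : HasDerivAt w 0 u := by
        rw [show (0:ℝ) = deriv x u - yd u from by rw [hxd_eq u ⟨hu.1, le_of_lt hu.2⟩]; ring]
        exact hd
      exact this.hasDerivWithinAt
    have := constant_of_has_deriv_right_zero hwc.continuousOn hw' t ht
    have hw0 : w 0 = 0 := by simp [hw_def, hx0, hy0]
    rw [hw0] at this
    have : x t = y t := by simp only [hw_def] at this; linarith
    exact this
  · intro hI
    have hxy : ∀ u ∈ Set.Icc (0:ℝ) 1, x u = y u := fun u hu => by
      rw [hI u hu, hint u hu]
    have hud : UniqueDiffOn ℝ (Set.Icc (0:ℝ) 1) := uniqueDiffOn_Icc one_pos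
    have hxd_eq : ∀ u ∈ Set.Icc (0:ℝ) 1, deriv x u = yd u := by
      intro u hu
      have h1 : HasDerivWithinAt x (yd u) (Set.Icc 0 1) u :=
        ((hy' u).hasDerivWithinAt).congr hxy (hxy u hu)
      have h2 : HasDerivWithinAt x (deriv x u) (Set.Icc 0 1) u :=
        ((hxd u).hasDerivAt).hasDerivWithinAt
      rw [← h2.derivWithin (hud u hu), h1.derivWithin (hud u hu)]
    have hxdd_eq : ∀ u ∈ Set.Icc (0:ℝ) 1, deriv (deriv x) u = f u - τ * yd u := by
      intro u hu
      have h1 : HasDerivWithinAt (deriv x) (f u - τ * yd u) (Set.Icc 0 1) u :=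
        ((hyd' u).hasDerivWithinAt).congr hxd_eq (hxd_eq u hu)
      have h2 : HasDerivWithinAt (deriv x) (deriv (deriv x) u) (Set.Icc 0 1) u :=
        ((hxdd u).hasDerivAt).hasDerivWithinAt
      rw [← h2.derivWithin (hud u hu), h1.derivWithin (hud u hu)]
    refine ⟨fun t ht => ?_, ?_, ?_⟩
    · have h1 := hxdd_eq t ht
      have h2 := hxd_eq t ht
      simp only [hf_def] at h1
      rw [h1, h2]
      ring
    · rw [hxy 0 (by norm_num), hy0]
    · rw [hxd_eq 0 (by norm_num), hyd0]
end
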